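/- arXiv:2410.08966 — 4 statements merged into one kernel-verified Lean document; each statement's English description precedes it below -/
import Mathlib

section
/- Let Γ be a (simple) graph on n vertices with at least c·n^2 edges, where c ∈ (0,1]. Then there exists a subset X of the vertices of size at least 2^{−5}·c·n such that for any two vertices u, v ∈ X (possibly equal) there are at least 2^{−35}·c^9·n^5 walks of length 6 from u to v, i.e. at least that many 5-tuples (z_1,...,z_5) of vertices such that uz_1, z_1z_2, z_2z_3, z_3z_4, z_4z_5, z_5v are all edges of Γ. -/
open Finset

set_option linter.unusedSectionVars false
set_option maxHeartbeats 1000000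

section Helpers
variable {V : Type} [Fintype V] [DecidableEq V] (Γ : SimpleGraph V) [DecidableRel Γ.Adj]

lemma mp_filter_prod_card (s t : Finset V) (Q : V → V → Prop) [∀ x y : V, Decidable (Q x y)] :
    ((s ×ˢ t).filter (fun p => Q p.1 p.2)).card = ∑ x ∈ s, (t.filter (fun y => Q x y)).card := by
  rw [Finset.card_filter, Finset.sum_product]
  exact Finset.sum_congr rfl fun x _ => (Finset.card_filter _ _).symm

lemma mp_dsum_erase (U : Finset V) (u : V) (hu : u ∈ U) :
    ∑ a ∈ U, (U ∩ Γ.neighborFinset a).card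
      = (∑ a ∈ U.erase u, ((U.erase u) ∩ Γ.neighborFinset a).card)
        + 2 * (U ∩ Γ.neighborFinset u).card := by
  have key : ∀ a ∈ U.erase u, (U ∩ Γ.neighborFinset a).card
      = ((U.erase u) ∩ Γ.neighborFinset a).card
        + (if u ∈ Γ.neighborFinset a then 1 else 0) := by
    intro a _
    rw [Finset.erase_inter]
    by_cases h : u ∈ Γ.neighborFinset a
    · have hm : u ∈ U ∩ Γ.neighborFinset a := Finset.mem_inter.2 ⟨hu, h⟩
      rw [if_pos h, Finset.card_erase_add_one hm]
    · rw [if_neg h, Finset.erase_eq_of_notMem (fun hmem => h (Finset.mem_inter.1 hmem).2),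
        add_zero]
  have e1 : (∑ a ∈ U.erase u, (U ∩ Γ.neighborFinset a).card) + (U ∩ Γ.neighborFinset u).card
      = ∑ a ∈ U, (U ∩ Γ.neighborFinset a).card := Finset.sum_erase_add U _ hu
  have e2 : ∑ a ∈ U.erase u, (U ∩ Γ.neighborFinset a).card
      = (∑ a ∈ U.erase u, ((U.erase u) ∩ Γ.neighborFinset a).card)
        + ∑ a ∈ U.erase u, (if u ∈ Γ.neighborFinset a then 1 else 0) := by
    rw [← Finset.sum_add_distrib]
    exact Finset.sum_congr rfl key
  have e3 : ∑ a ∈ U.erase u, (if u ∈ Γ.neighborFinset a then 1 else 0)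
      = (U ∩ Γ.neighborFinset u).card := by
    rw [← Finset.card_filter]
    congr 1
    ext a
    simp only [Finset.mem_filter, Finset.mem_erase, Finset.mem_inter,
      SimpleGraph.mem_neighborFinset]
    constructor
    · rintro ⟨⟨hne, haU⟩, hadj⟩
      exact ⟨haU, hadj.symm⟩
    · rintro ⟨haU, hadj⟩
      exact ⟨⟨Γ.ne_of_adj hadj.symm, haU⟩, hadj.symm⟩
  omega

lemma mp_min_deg_subgraph (c : ℝ) (hc : 0 < c) (hpos : 0 < Fintype.card V)
    (hE : 2 * c * (Fintype.card V : ℝ) * (Fintype.card V : ℝ)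
        ≤ ∑ a : V, ((Finset.univ ∩ Γ.neighborFinset a).card : ℝ)) :
    ∃ U : Finset V, U.Nonempty ∧
      ∀ u ∈ U, c * (Fintype.card V : ℝ) ≤ ((U ∩ Γ.neighborFinset u).card : ℝ) := by
  classical
  set n : ℝ := (Fintype.card V : ℝ) with hn
  have hn0 : 0 < n := by rw [hn]; exact_mod_cast hpos
  have hcn : 0 < c * n := mul_pos hc hn0
  set P : Finset V → Prop := fun U => U.Nonempty ∧
      2 * c * n * (U.card : ℝ) ≤ ∑ a ∈ U, ((U ∩ Γ.neighborFinset a).card : ℝ) with hP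
  have hne : Nonempty V := Fintype.card_pos_iff.mp hpos
  have hunivP : P Finset.univ := by
    refine ⟨Finset.univ_nonempty, ?_⟩
    calc 2 * c * n * ((Finset.univ : Finset V).card : ℝ) = 2 * c * n * n := by
          rw [hn]; norm_num
      _ ≤ _ := hE
  set S : Finset (Finset V) := Finset.univ.powerset.filter P with hS
  have hSne : S.Nonempty := ⟨Finset.univ, by
    simp only [hS, Finset.mem_filter, Finset.mem_powerset]
    exact ⟨Finset.Subset.refl _, hunivP⟩⟩
  obtain ⟨U, hUS, hUmin⟩ := Finset.exists_min_image S (fun T => T.card) hSne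
  have hUP : P U := (Finset.mem_filter.1 hUS).2
  refine ⟨U, hUP.1, ?_⟩
  intro u hu
  by_contra hlt
  push_neg at hlt
  have hcard1 : 1 ≤ U.card := Finset.card_pos.2 hUP.1
  have herase_ne : (U.erase u).Nonempty := by
    rcases Finset.eq_empty_or_nonempty (U.erase u) with he | he
    · exfalso
      have hUsing : U = {u} := by
        apply Finset.eq_singleton_iff_unique_mem.2
        refine ⟨hu, fun x hx => ?_⟩
        by_contra hxu
        exact Finset.notMem_empty x (he ▸ Finset.mem_erase.2 ⟨hxu, hx⟩)
      have := hUP.2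
      rw [hUsing] at this
      simp only [Finset.card_singleton, Nat.cast_one, mul_one, Finset.sum_singleton] at this
      have hself : ({u} : Finset V) ∩ Γ.neighborFinset u = ∅ := by
        ext x
        simp only [Finset.mem_inter, Finset.mem_singleton, SimpleGraph.mem_neighborFinset,
          Finset.notMem_empty, iff_false]
        rintro ⟨rfl, hadj⟩
        exact Γ.loopless.irrefl _ hadj
      rw [hself] at this
      simp at this
      nlinarith
    · exact he
  have hkey := mp_dsum_erase Γ U u hu
  have hkeyR : (∑ a ∈ U, ((U ∩ Γ.neighborFinset a).card : ℝ))
      = (∑ a ∈ U.erase u, (((U.erase u) ∩ Γ.neighborFinset a).card : ℝ))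
        + 2 * ((U ∩ Γ.neighborFinset u).card : ℝ) := by
    exact_mod_cast congrArg (Nat.cast : ℕ → ℝ) hkey
  have hcerase : ((U.erase u).card : ℝ) = (U.card : ℝ) - 1 := by
    rw [Finset.card_erase_of_mem hu]
    push_cast [hcard1]
    ring
  have heraseP : P (U.erase u) := by
    refine ⟨herase_ne, ?_⟩
    rw [hcerase]
    have h2 := hUP.2
    nlinarith [h2, hlt, hkeyR]
  have heraseS : U.erase u ∈ S := by
    simp only [hS, Finset.mem_filter, Finset.mem_powerset]
    exact ⟨Finset.subset_univ _, heraseP⟩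
  have := hUmin _ heraseS
  have hlt2 : (U.erase u).card < U.card := Finset.card_erase_lt_of_mem hu
  omega

lemma mp_card_le_ncard {α : Type} (s : Finset α) (T : Set α) [Finite α]
    (h : ∀ x ∈ s, x ∈ T) : (s.card : ℝ) ≤ (T.ncard : ℝ) := by
  have h1 : (s : Set α).ncard = s.card := Set.ncard_coe_finset s
  have hsubset : (s : Set α) ⊆ T := fun x hx => h x (Finset.mem_coe.1 hx)
  have h2 := Set.ncard_le_ncard hsubset (Set.toFinite T)
  rw [h1] at h2
  exact_mod_cast h2

end Helpers

/-- If `Γ` is a graph on `n` vertices with at least `c·n²` edges (`c ∈ (0,1]`), then there is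
a set `X` of at least `2⁻⁵·c·n` vertices such that between any two (possibly equal) vertices
of `X` there are at least `2⁻³⁵·c⁹·n⁵` walks of length `6`. -/
theorem many_paths_of_length_six (V : Type) [Fintype V] [DecidableEq V]
    (Γ : SimpleGraph V) [DecidableRel Γ.Adj] (c : ℝ) (hc : 0 < c) (hc1 : c ≤ 1)
    (hE : c * (Fintype.card V : ℝ) ^ 2 ≤ (Γ.edgeFinset.card : ℝ)) :
    ∃ X : Finset V,
      (2 : ℝ) ^ (-5 : ℤ) * c * (Fintype.card V : ℝ) ≤ (X.card : ℝ) ∧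
      ∀ u ∈ X, ∀ v ∈ X,
        (2 : ℝ) ^ (-35 : ℤ) * c ^ 9 * (Fintype.card V : ℝ) ^ 5 ≤
          ((({ z : V × V × V × V × V |
              Γ.Adj u z.1 ∧ Γ.Adj z.1 z.2.1 ∧ Γ.Adj z.2.1 z.2.2.1 ∧
              Γ.Adj z.2.2.1 z.2.2.2.1 ∧ Γ.Adj z.2.2.2.1 z.2.2.2.2 ∧
              Γ.Adj z.2.2.2.2 v } : Set (V × V × V × V × V)).ncard : ℝ)) := by
  classical
  rcases Nat.eq_zero_or_pos (Fintype.card V) with h0 | hpos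
  · refine ⟨∅, ?_, ?_⟩
    · simp [h0]
    · intro u hu
      exact absurd hu (Finset.notMem_empty u)
  set n : ℝ := (Fintype.card V : ℝ) with hn
  have hn0 : 0 < n := by rw [hn]; exact_mod_cast hpos
  have hcn : 0 < c * n := mul_pos hc hn0
  -- degree sum bound
  have hdegsum : 2 * c * n * n ≤ ∑ a : V, ((Finset.univ ∩ Γ.neighborFinset a).card : ℝ) := by
    have h1 : ∀ a : V, (Finset.univ ∩ Γ.neighborFinset a).card = Γ.degree a := by
      intro a
      rw [Finset.univ_inter]
      rfl
    have h2 : (∑ a : V, ((Finset.univ ∩ Γ.neighborFinset a).card : ℝ))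
        = 2 * (Γ.edgeFinset.card : ℝ) := by
      have := Γ.sum_degrees_eq_twice_card_edges
      have hcast : (∑ a : V, ((Finset.univ ∩ Γ.neighborFinset a).card : ℝ))
          = ((∑ a : V, Γ.degree a : ℕ) : ℝ) := by
        push_cast
        exact Finset.sum_congr rfl fun a _ => by rw [h1 a]
      rw [hcast, this]
      push_cast
      ring
    rw [h2]
    nlinarith [hE]
  obtain ⟨U, hUne, hUdeg⟩ := mp_min_deg_subgraph Γ c hc hpos (by rw [hn] at hdegsum; exact hdegsum)
  rw [← hn] at hUdeg
  -- basic quantities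
  have hm1 : 1 ≤ U.card := Finset.card_pos.2 hUne
  have hm0 : (0:ℝ) < (U.card : ℝ) := by exact_mod_cast hm1
  have hmn : (U.card : ℝ) ≤ n := by rw [hn]; exact_mod_cast Finset.card_le_univ U
  set DS : V → Finset V := fun a => U ∩ Γ.neighborFinset a with hDS
  set D : Finset (V × V) := (U ×ˢ U).filter (fun p => Γ.Adj p.1 p.2) with hD
  set WS : V → V → Finset (V × V) := fun x y =>
    (U ×ˢ U).filter (fun p => Γ.Adj x p.1 ∧ Γ.Adj p.1 p.2 ∧ Γ.Adj p.2 y) with hWS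
  set Bad : V → V → Prop := fun x y => ((WS x y).card : ℝ) < c ^ 3 / 32 * n ^ 2 with hBad
  set NB : V × V → ℕ := fun p =>
    ((U ×ˢ U).filter (fun xy => Γ.Adj p.1 xy.1 ∧ Γ.Adj p.2 xy.2 ∧ Bad xy.1 xy.2)).card with hNB
  clear_value DS D
  have hDSfilter : ∀ a : V, U.filter (fun b => Γ.Adj a b) = DS a := by
    intro a
    ext b
    simp [hDS, SimpleGraph.mem_neighborFinset]
  have hDSdeg : ∀ a ∈ U, c * n ≤ ((DS a).card : ℝ) := by
    intro a ha
    rw [hDS]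
    exact hUdeg a ha
  have hDcard : D.card = ∑ a ∈ U, (DS a).card := by
    rw [hD, mp_filter_prod_card U U (fun x y => Γ.Adj x y)]
    exact Finset.sum_congr rfl fun a _ => by rw [hDSfilter a]
  have hDge : c * n * (U.card : ℝ) ≤ (D.card : ℝ) := by
    have hcast : (D.card : ℝ) = ∑ a ∈ U, ((DS a).card : ℝ) := by
      rw [hDcard]; push_cast; ring
    rw [hcast]
    calc c * n * (U.card : ℝ) = ∑ _a ∈ U, c * n := by
          rw [Finset.sum_const, nsmul_eq_mul]; ring
      _ ≤ _ := Finset.sum_le_sum fun a ha => hDSdeg a ha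
  have hDne : D.Nonempty := by
    rcases Finset.eq_empty_or_nonempty D with hDe | hDe
    · exfalso
      rw [hDe] at hDge
      simp at hDge
      nlinarith
    · exact hDe
  have hsum1 : (D.card : ℝ) * (c * n) ≤ ∑ p ∈ D, ((DS p.1).card : ℝ) := by
    have hb : ∀ p ∈ D, c * n ≤ ((DS p.1).card : ℝ) := by
      intro p hp
      rw [hD] at hp
      exact hDSdeg p.1 (Finset.mem_product.1 (Finset.mem_filter.1 hp).1).1
    have := Finset.card_nsmul_le_sum D (fun p => ((DS p.1).card : ℝ)) (c * n) hb
    rw [nsmul_eq_mul] at this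
    exact this
  -- swap bound
  have hswap : ∑ p ∈ D, (NB p : ℝ) ≤ (U.card : ℝ)^2 * (c^3/32 * n^2) := by
    have hswapN : ∑ p ∈ D, NB p
        = ∑ xy ∈ U ×ˢ U,
            (D.filter (fun p => Γ.Adj p.1 xy.1 ∧ Γ.Adj p.2 xy.2 ∧ Bad xy.1 xy.2)).card := by
      have e1 : ∀ p : V × V, NB p
          = ∑ xy ∈ U ×ˢ U,
              if Γ.Adj p.1 xy.1 ∧ Γ.Adj p.2 xy.2 ∧ Bad xy.1 xy.2 then 1 else 0 := by
        intro p
        rw [hNB]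
        exact Finset.card_filter _ _
      rw [Finset.sum_congr rfl fun p _ => e1 p, Finset.sum_comm]
      exact Finset.sum_congr rfl fun xy _ => (Finset.card_filter _ _).symm
    have hcast : ∑ p ∈ D, (NB p : ℝ)
        = ∑ xy ∈ U ×ˢ U,
            ((D.filter (fun p => Γ.Adj p.1 xy.1 ∧ Γ.Adj p.2 xy.2 ∧ Bad xy.1 xy.2)).card : ℝ) := by
      rw [← Nat.cast_sum, hswapN, Nat.cast_sum]
    rw [hcast]
    have hterm : ∀ xy ∈ U ×ˢ U,
        ((D.filter (fun p => Γ.Adj p.1 xy.1 ∧ Γ.Adj p.2 xy.2 ∧ Bad xy.1 xy.2)).card : ℝ)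
          ≤ c^3/32 * n^2 := by
      intro xy _
      by_cases hb : Bad xy.1 xy.2
      · have hle : (D.filter (fun p => Γ.Adj p.1 xy.1 ∧ Γ.Adj p.2 xy.2 ∧ Bad xy.1 xy.2)).card
            ≤ (WS xy.1 xy.2).card := by
          apply Finset.card_le_card
          intro p hp
          rw [hD] at hp
          simp only [Finset.mem_filter, Finset.mem_product] at hp
          simp only [hWS, Finset.mem_filter, Finset.mem_product]
          exact ⟨hp.1.1, hp.2.1.symm, hp.1.2, hp.2.2.1⟩
        have hb' : ((WS xy.1 xy.2).card : ℝ) < c^3/32 * n^2 := by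
          have hbb := hb
          rw [hBad] at hbb
          exact hbb
        have hcle : ((D.filter (fun p =>
            Γ.Adj p.1 xy.1 ∧ Γ.Adj p.2 xy.2 ∧ Bad xy.1 xy.2)).card : ℝ)
            ≤ ((WS xy.1 xy.2).card : ℝ) := Nat.cast_le.2 hle
        linarith
      · have heq : D.filter (fun p => Γ.Adj p.1 xy.1 ∧ Γ.Adj p.2 xy.2 ∧ Bad xy.1 xy.2) = ∅ := by
          apply Finset.filter_false_of_mem
          intro p _
          intro h
          exact hb h.2.2
        rw [heq]
        simp
        positivity
    have := Finset.sum_le_card_nsmul (U ×ˢ U) _ (c^3/32 * n^2) hterm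
    rw [nsmul_eq_mul, Finset.card_product] at this
    calc ∑ xy ∈ U ×ˢ U, ((D.filter (fun p =>
            Γ.Adj p.1 xy.1 ∧ Γ.Adj p.2 xy.2 ∧ Bad xy.1 xy.2)).card : ℝ)
        ≤ ((U.card * U.card : ℕ) : ℝ) * (c^3/32 * n^2) := this
      _ = (U.card : ℝ)^2 * (c^3/32 * n^2) := by push_cast; ring
  -- choose a good edge
  have hmain : ∑ _p ∈ D, (3/4 * (c * n)) ≤ ∑ p ∈ D, (((DS p.1).card : ℝ) - 8/(c*n) * (NB p : ℝ)) := by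
    rw [Finset.sum_sub_distrib, Finset.sum_const, nsmul_eq_mul, ← Finset.mul_sum]
    have h8 : 8/(c*n) * (∑ p ∈ D, (NB p : ℝ)) ≤ (1/4) * (c*n) * (D.card : ℝ) := by
      have h81 : 8/(c*n) * (∑ p ∈ D, (NB p : ℝ)) ≤ 8/(c*n) * ((U.card : ℝ)^2 * (c^3/32 * n^2)) := by
        apply mul_le_mul_of_nonneg_left hswap
        positivity
      have h82 : 8/(c*n) * ((U.card : ℝ)^2 * (c^3/32 * n^2)) = (1/4) * c^2 * n * (U.card:ℝ)^2 := by
        field_simp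
        ring
      have h83 : (1/4) * c^2 * n * (U.card:ℝ)^2 ≤ (1/4) * c^2 * n * (n * (U.card:ℝ)) := by
        apply mul_le_mul_of_nonneg_left _ (by positivity)
        nlinarith [hmn, hm0]
      have h84 : (1/4) * c^2 * n * (n * (U.card:ℝ)) = (1/4) * (c*n) * (c * n * (U.card:ℝ)) := by
        ring
      have h85 : (1/4) * (c*n) * (c * n * (U.card:ℝ)) ≤ (1/4) * (c*n) * (D.card : ℝ) := by
        apply mul_le_mul_of_nonneg_left hDge (by positivity)
      linarith
    nlinarith [hsum1, h8]
  obtain ⟨p₀, hp₀D, hp₀⟩ := Finset.exists_le_of_sum_le (f := fun _ => 3/4 * (c * n))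
    (g := fun p => ((DS p.1).card : ℝ) - 8/(c*n) * (NB p : ℝ)) hDne hmain
  obtain ⟨a0, b0⟩ := p₀
  rw [hD] at hp₀D
  have hp₀mem := Finset.mem_filter.1 hp₀D
  have ha0 : a0 ∈ U := (Finset.mem_product.1 hp₀mem.1).1
  have hb0 : b0 ∈ U := (Finset.mem_product.1 hp₀mem.1).2
  simp only at hp₀
  -- row decomposition at (a0, b0)
  set row : V → ℕ := fun x => ((DS b0).filter (fun y => Bad x y)).card with hrow
  clear_value row
  have hNBrow : NB (a0, b0) = ∑ x ∈ DS a0, row x := by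
    have h1 : NB (a0, b0)
        = ∑ x ∈ U, (U.filter (fun y => Γ.Adj a0 x ∧ Γ.Adj b0 y ∧ Bad x y)).card := by
      rw [hNB]
      exact mp_filter_prod_card U U (fun x y => Γ.Adj a0 x ∧ Γ.Adj b0 y ∧ Bad x y)
    rw [h1]
    have e : ∀ x ∈ U, (U.filter (fun y => Γ.Adj a0 x ∧ Γ.Adj b0 y ∧ Bad x y)).card
        = if Γ.Adj a0 x then row x else 0 := by
      intro x _
      by_cases hax : Γ.Adj a0 x
      · rw [if_pos hax]
        have hrw : row x = ((DS b0).filter (fun y => Bad x y)).card := by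
          rw [hrow]
        rw [hrw]
        congr 1
        rw [← hDSfilter b0, Finset.filter_filter]
        apply Finset.filter_congr
        intro y _
        simp [hax]
      · rw [if_neg hax, Finset.filter_false_of_mem, Finset.card_empty]
        intro y _
        intro h
        exact hax h.1
    rw [Finset.sum_congr rfl e, ← Finset.sum_filter, hDSfilter a0]
  -- define X
  set X : Finset V := (DS a0).filter (fun x => (row x : ℝ) < c*n/8) with hX
  set Y : Finset V := (DS a0).filter (fun x => ¬ ((row x : ℝ) < c*n/8)) with hY
  clear_value X Y
  have hXY : X.card + Y.card = (DS a0).card := by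
    rw [hX, hY]
    exact Finset.card_filter_add_card_filter_not _
  have hYb : (Y.card : ℝ) * (c*n/8) ≤ (NB (a0, b0) : ℝ) := by
    have h1 : Y.card • (c*n/8) ≤ ∑ x ∈ Y, (row x : ℝ) := by
      apply Finset.card_nsmul_le_sum
      intro x hx
      rw [hY] at hx
      exact not_lt.1 (Finset.mem_filter.1 hx).2
    have h2 : ∑ x ∈ Y, (row x : ℝ) ≤ ∑ x ∈ DS a0, (row x : ℝ) := by
      apply Finset.sum_le_sum_of_subset_of_nonneg (by rw [hY]; exact Finset.filter_subset _ _)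
      intro x _ _
      positivity
    have h3 : (∑ x ∈ DS a0, (row x : ℝ)) = (NB (a0, b0) : ℝ) := by
      rw [hNBrow]; push_cast; ring
    rw [nsmul_eq_mul] at h1
    linarith
  have hXcard : 3/4 * (c*n) ≤ (X.card : ℝ) := by
    have hY8 : (Y.card : ℝ) ≤ 8/(c*n) * (NB (a0, b0) : ℝ) := by
      rw [div_mul_eq_mul_div, le_div_iff₀ hcn]
      nlinarith [hYb]
    have hXYR : (X.card : ℝ) + (Y.card : ℝ) = ((DS a0).card : ℝ) := by
      exact_mod_cast hXY
    linarith [hp₀]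
  refine ⟨X, ?_, ?_⟩
  · have h32 : (2:ℝ) ^ (-5 : ℤ) = 1/32 := by norm_num
    rw [h32]
    nlinarith [hXcard, hcn]
  · intro u hu v hv
    rw [hX] at hu hv
    obtain ⟨hu1, hu2⟩ := Finset.mem_filter.1 hu
    obtain ⟨hv1, hv2⟩ := Finset.mem_filter.1 hv
    -- good middle vertices
    set GY : Finset V := (DS b0).filter (fun y => ¬ Bad u y ∧ ¬ Bad v y) with hGY
    clear_value GY
    have hGYcard : 3/4 * (c*n) ≤ (GY.card : ℝ) := by
      have hsub : DS b0 ⊆ GY ∪ ((DS b0).filter (fun y => Bad u y))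
          ∪ ((DS b0).filter (fun y => Bad v y)) := by
        intro y hy
        simp only [Finset.mem_union, Finset.mem_filter, hGY]
        by_cases h1 : Bad u y
        · tauto
        · by_cases h2 : Bad v y <;> tauto
      have hcardle := Finset.card_le_card hsub
      have hle2 : (GY ∪ ((DS b0).filter (fun y => Bad u y))
          ∪ ((DS b0).filter (fun y => Bad v y))).card
            ≤ GY.card + row u + row v := by
        calc (GY ∪ ((DS b0).filter (fun y => Bad u y))
            ∪ ((DS b0).filter (fun y => Bad v y))).card
            ≤ (GY ∪ ((DS b0).filter (fun y => Bad u y))).card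
              + ((DS b0).filter (fun y => Bad v y)).card := Finset.card_union_le _ _
          _ ≤ GY.card + row u + row v := by
              have h1 := Finset.card_union_le GY ((DS b0).filter (fun y => Bad u y))
              have hru : row u = ((DS b0).filter (fun y => Bad u y)).card := by rw [hrow]
              have hrv : row v = ((DS b0).filter (fun y => Bad v y)).card := by rw [hrow]
              omega
      have hdb0 : c * n ≤ ((DS b0).card : ℝ) := hDSdeg b0 hb0
      have hcc : ((DS b0).card : ℝ) ≤ (GY.card : ℝ) + (row u : ℝ) + (row v : ℝ) := by
        exact_mod_cast le_trans hcardle hle2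
      linarith [hu2, hv2]
    -- symmetry of the walk count
    have hWsym : ∀ x y : V, (WS x y).card = (WS y x).card := by
      intro x y
      apply Finset.card_bij (fun p _ => (p.2, p.1))
      · intro p hp
        rw [hWS] at hp ⊢
        simp only [Finset.mem_filter, Finset.mem_product] at hp ⊢
        exact ⟨⟨hp.1.2, hp.1.1⟩, hp.2.2.2.symm, hp.2.2.1.symm, hp.2.1.symm⟩
      · intro p1 h1 p2 h2 h
        have hfst := congrArg Prod.fst h
        have hsnd := congrArg Prod.snd h
        exact Prod.ext hsnd hfst
      · intro q hq
        refine ⟨(q.2, q.1), ?_, by simp⟩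
        rw [hWS] at hq ⊢
        simp only [Finset.mem_filter, Finset.mem_product] at hq ⊢
        exact ⟨⟨hq.1.2, hq.1.1⟩, hq.2.2.2.symm, hq.2.2.1.symm, hq.2.1.symm⟩
    have hgood : ∀ y ∈ GY, c^3/32*n^2 ≤ ((WS u y).card : ℝ)
        ∧ c^3/32*n^2 ≤ ((WS y v).card : ℝ) := by
      intro y hy
      rw [hGY] at hy
      obtain ⟨-, hbu, hbv⟩ := Finset.mem_filter.1 hy
      rw [hBad] at hbu hbv
      constructor
      · exact not_lt.1 hbu
      · rw [hWsym y v]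
        exact not_lt.1 hbv
    -- the family of walks
    set F : Finset (Σ _ : V, (V × V) × (V × V)) :=
      GY.sigma (fun y => (WS u y) ×ˢ (WS y v)) with hF
    clear_value F
    have hFcard : F.card = ∑ y ∈ GY, (WS u y).card * (WS y v).card := by
      rw [hF, Finset.card_sigma]
      exact Finset.sum_congr rfl fun y _ => Finset.card_product _ _
    have hFlow : 3/4 * (c*n) * (c^3/32*n^2)^2 ≤ (F.card : ℝ) := by
      have hterm : ∀ y ∈ GY, (c^3/32*n^2)^2 ≤ ((WS u y).card : ℝ) * ((WS y v).card : ℝ) := by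
        intro y hy
        obtain ⟨h1, h2⟩ := hgood y hy
        have hpos : (0:ℝ) ≤ c^3/32*n^2 := by positivity
        nlinarith
      have h1 : GY.card • ((c^3/32*n^2)^2) ≤ ∑ y ∈ GY, ((WS u y).card : ℝ) * ((WS y v).card : ℝ) :=
        Finset.card_nsmul_le_sum _ _ _ hterm
      rw [nsmul_eq_mul] at h1
      have h2 : (F.card : ℝ) = ∑ y ∈ GY, ((WS u y).card : ℝ) * ((WS y v).card : ℝ) := by
        rw [hFcard]; push_cast; ring
      have h3 : 3/4 * (c*n) * (c^3/32*n^2)^2 ≤ (GY.card : ℝ) * (c^3/32*n^2)^2 := by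
        apply mul_le_mul_of_nonneg_right hGYcard (by positivity)
      linarith
    -- embed into the walk set
    have hinj : Function.Injective
        (fun s : (Σ _ : V, (V × V) × (V × V)) => (s.2.1.1, s.2.1.2, s.1, s.2.2.1, s.2.2.2)) := by
      rintro ⟨y, ⟨⟨p1, p2⟩, ⟨q1, q2⟩⟩⟩ ⟨y', ⟨⟨p1', p2'⟩, ⟨q1', q2'⟩⟩⟩ h
      simp only [Prod.mk.injEq] at h
      obtain ⟨h1, h2, h3, h4, h5⟩ := h
      subst h1; subst h2; subst h3; subst h4; subst h5
      rfl
    have hGcard : (F.image (fun s : (Σ _ : V, (V × V) × (V × V)) =>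
        (s.2.1.1, s.2.1.2, s.1, s.2.2.1, s.2.2.2))).card = F.card :=
      Finset.card_image_of_injective F hinj
    have hsub : ∀ t ∈ F.image (fun s : (Σ _ : V, (V × V) × (V × V)) =>
        (s.2.1.1, s.2.1.2, s.1, s.2.2.1, s.2.2.2)),
        t ∈ { z : V × V × V × V × V |
          Γ.Adj u z.1 ∧ Γ.Adj z.1 z.2.1 ∧ Γ.Adj z.2.1 z.2.2.1 ∧
          Γ.Adj z.2.2.1 z.2.2.2.1 ∧ Γ.Adj z.2.2.2.1 z.2.2.2.2 ∧
          Γ.Adj z.2.2.2.2 v } := by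
      intro t ht
      obtain ⟨s, hsF, rfl⟩ := Finset.mem_image.1 ht
      obtain ⟨y, ⟨⟨p1, p2⟩, ⟨q1, q2⟩⟩⟩ := s
      rw [hF] at hsF
      obtain ⟨hy, hpq⟩ := Finset.mem_sigma.1 hsF
      obtain ⟨hp, hq⟩ := Finset.mem_product.1 hpq
      simp only [hWS, Finset.mem_filter] at hp hq
      exact ⟨hp.2.1, hp.2.2.1, hp.2.2.2, hq.2.1, hq.2.2.1, hq.2.2.2⟩
    have hncard := mp_card_le_ncard
      (F.image (fun s : (Σ _ : V, (V × V) × (V × V)) =>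
        (s.2.1.1, s.2.1.2, s.1, s.2.2.1, s.2.2.2)))
      ({ z : V × V × V × V × V |
          Γ.Adj u z.1 ∧ Γ.Adj z.1 z.2.1 ∧ Γ.Adj z.2.1 z.2.2.1 ∧
          Γ.Adj z.2.2.1 z.2.2.2.1 ∧ Γ.Adj z.2.2.2.1 z.2.2.2.2 ∧
          Γ.Adj z.2.2.2.2 v }) hsub
    have hcasteq : ((F.image (fun s : (Σ _ : V, (V × V) × (V × V)) =>
        (s.2.1.1, s.2.1.2, s.1, s.2.2.1, s.2.2.2))).card : ℝ) = (F.card : ℝ) := by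
      exact_mod_cast hGcard
    have hnum : (2:ℝ) ^ (-35 : ℤ) * c^9 * n^5 ≤ 3/4 * (c*n) * (c^3/32*n^2)^2 := by
      have h97 : c^9 ≤ c^7 := pow_le_pow_of_le_one hc.le hc1 (by norm_num)
      have heq : 3/4 * (c*n) * (c^3/32*n^2)^2 = 3/4096 * (c^7 * n^5) := by ring
      have h35 : (2:ℝ) ^ (-35 : ℤ) = 1/34359738368 := by norm_num
      rw [heq, h35]
      have hn5 : (0:ℝ) ≤ n^5 := by positivity
      nlinarith [h97, hn5, pow_pos hn0 5]
    exact le_trans (le_trans hnum (le_trans hFlow (le_of_eq hcasteq.symm))) hncard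
end

section
/- Let G be a finite-dimensional F_p-vector space, β : G × G → F_p^r a bilinear map, and V ≤ G a subspace such that for every nonzero λ ∈ F_p^r the bilinear form (x,y) ↦ λ·β(x,y) restricted to V × V has rank at least s. Fix a coset a + V and let B = {(x,y) ∈ (a+V) × V : β(x,y) = 0}; for x ∈ a+V write B_{x·} = {y ∈ V : β(x,y) = 0}. Let S ≤ V be a subspace of codimension d and let k be a positive integer. Then (S ∩ B_{x_1·} ∩ ... ∩ B_{x_k·}) + (S ∩ B_{y_1·} ∩ ... ∩ B_{y_k·}) = S holds for all but at most 81·p^{2d + 4kr − s/4}·|V|^{2k} of the choices (x_1,...,x_k,y_1,...,y_k) ∈ (a+V)^{2k}. -/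
/-- `HasBilinRankDecomp b m` says that the bilinear form `b` can be written as a sum of `m`
products of pairs of linear forms.  The rank of `b` is the least such `m`. -/
def HasBilinRankDecomp {k V : Type*} [CommSemiring k] [AddCommMonoid V] [Module k V]
    (b : V → V → k) (m : ℕ) : Prop :=
  ∃ α α' : Fin m → (V →ₗ[k] k), ∀ x y, b x y = ∑ i, α i x * α' i y

open Module

-- helper 1: card of finite module over ZMod p
lemma card_module_eq (p : ℕ) [Fact p.Prime] (M : Type*) [AddCommGroup M] [Module (ZMod p) M]
    [Finite M] : Nat.card M = p ^ Module.finrank (ZMod p) M := by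
  have : Fintype M := Fintype.ofFinite M
  rw [Nat.card_eq_fintype_card, card_eq_pow_finrank (K := ZMod p), ZMod.card]

-- helper 2: finrank ker of composition
lemma finrank_ker_comp_le {K M N P : Type*} [Field K] [AddCommGroup M] [Module K M]
    [AddCommGroup N] [Module K N] [AddCommGroup P] [Module K P]
    [FiniteDimensional K M] [FiniteDimensional K N]
    (f : M →ₗ[K] N) (g : N →ₗ[K] P) :
    finrank K (LinearMap.ker (g ∘ₗ f)) ≤
      finrank K (LinearMap.ker f) + finrank K (LinearMap.ker g) := by
  set Q := LinearMap.ker (g ∘ₗ f)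
  let h : Q →ₗ[K] N := f ∘ₗ Q.subtype
  have h1 : finrank K (LinearMap.range h) + finrank K (LinearMap.ker h) = finrank K Q :=
    LinearMap.finrank_range_add_finrank_ker h
  have h2 : finrank K (LinearMap.range h) ≤ finrank K (LinearMap.ker g) := by
    apply Submodule.finrank_mono
    rintro _ ⟨x, rfl⟩
    have := x.2
    simp only [LinearMap.mem_ker, LinearMap.comp_apply, Q] at this
    simpa [h] using this
  have h3 : finrank K (LinearMap.ker h) ≤ finrank K (LinearMap.ker f) := by
    apply LinearMap.finrank_le_finrank_of_injective
      (f := (Q.subtype ∘ₗ (LinearMap.ker h).subtype).codRestrict (LinearMap.ker f) ?_)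
    · intro x y hxy
      have h2 := congrArg Subtype.val hxy
      exact Subtype.ext (Subtype.ext h2)
    · rintro ⟨x, hx⟩
      simp only [LinearMap.mem_ker, h, LinearMap.comp_apply] at hx ⊢
      exact hx
  omega
section KerBound

variable (p : ℕ) [hp : Fact p.Prime]
    (G : Type) [AddCommGroup G] [Module (ZMod p) G] [Fintype G]
    (r : ℕ) (β : G →ₗ[ZMod p] G →ₗ[ZMod p] (Fin r → ZMod p))
    (V : Submodule (ZMod p) G) (s : ℝ)
    (S : Submodule (ZMod p) G) (d : ℕ)

lemma ker_bound
    (hrank : ∀ lam : Fin r → ZMod p, lam ≠ 0 →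
      ∀ m : ℕ, HasBilinRankDecomp (fun x y : V => ∑ i, lam i * β (x : G) (y : G) i) m →
        s ≤ (m : ℝ))
    (hSV : S ≤ V)
    (hcodim : Module.finrank (ZMod p) V = Module.finrank (ZMod p) S + d)
    (ν : Fin r → ZMod p) (hν : ν ≠ 0) :
    ((Nat.card {v : G // v ∈ V ∧ ∀ w : S, ∑ j, ν j * β v (w : G) j = 0}) : ℝ) ≤
      (Nat.card ↥V : ℝ) * (p : ℝ) ^ ((d : ℝ) - s) := by
  classical
  haveI : Module.Finite (ZMod p) ↥V := Module.Finite.of_finite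
  haveI : Module.Finite (ZMod p) ↥S := Module.Finite.of_finite
  let dot : (Fin r → ZMod p) →ₗ[ZMod p] ZMod p := ∑ j, ν j • LinearMap.proj j
  have dot_apply : ∀ v, dot v = ∑ j, ν j * v j := by
    intro v
    simp [dot, LinearMap.sum_apply]
  let Bν : G →ₗ[ZMod p] Module.Dual (ZMod p) G :=
    (LinearMap.llcomp (ZMod p) G (Fin r → ZMod p) (ZMod p) dot).comp β
  let bV : ↥V →ₗ[ZMod p] Module.Dual (ZMod p) ↥V := V.subtype.dualMap ∘ₗ Bν ∘ₗ V.subtype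
  let Rr : Module.Dual (ZMod p) ↥V →ₗ[ZMod p] Module.Dual (ZMod p) ↥S :=
    (Submodule.inclusion hSV).dualMap
  let θ : ↥V →ₗ[ZMod p] Module.Dual (ZMod p) ↥S := Rr ∘ₗ bV
  have hmemθ : ∀ x : ↥V, x ∈ LinearMap.ker θ ↔
      ∀ w : ↥S, ∑ j, ν j * β (x : G) (w : G) j = 0 := by
    intro x
    simp only [LinearMap.mem_ker, LinearMap.ext_iff, LinearMap.zero_apply, θ, Rr, bV, Bν,
      LinearMap.comp_apply, LinearMap.dualMap_apply, Submodule.subtype_apply,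
      LinearMap.llcomp_apply, Submodule.coe_inclusion]
    exact forall_congr' fun w => by rw [dot_apply]
  -- step A: finrank of ker Rr is d
  have hRsurj : Function.Surjective Rr :=
    LinearMap.dualMap_surjective_of_injective (Submodule.inclusion_injective hSV)
  have hkerR : finrank (ZMod p) (LinearMap.ker Rr) = d := by
    have h1 := LinearMap.finrank_range_add_finrank_ker Rr
    rw [LinearMap.range_eq_top.mpr hRsurj, finrank_top, Subspace.dual_finrank_eq,
      Subspace.dual_finrank_eq] at h1
    omega
  -- step B: rank bound for ker bV
  have hbVker : ∀ x : ↥V, bV x = 0 ↔ ∀ y : ↥V, ∑ j, ν j * β (x : G) (y : G) j = 0 := by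
    intro x
    simp only [LinearMap.ext_iff, LinearMap.zero_apply, bV, Bν,
      LinearMap.comp_apply, LinearMap.dualMap_apply, Submodule.subtype_apply,
      LinearMap.llcomp_apply]
    exact forall_congr' fun w => by rw [dot_apply]
  set K : Submodule (ZMod p) ↥V := LinearMap.ker bV with hK
  let cbar : (↥V ⧸ K) →ₗ[ZMod p] Module.Dual (ZMod p) ↥V := K.liftQ bV le_rfl
  set m := finrank (ZMod p) (↥V ⧸ K) with hm
  let bas : Basis (Fin m) (ZMod p) (↥V ⧸ K) := Module.finBasis (ZMod p) (↥V ⧸ K)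
  have decomp : HasBilinRankDecomp (fun x y : ↥V => ∑ i, ν i * β (x : G) (y : G) i) m := by
    refine ⟨fun i => (bas.coord i) ∘ₗ K.mkQ, fun i => cbar (bas i), fun x y => ?_⟩
    dsimp only
    have hxy : ∑ i, ν i * β (x : G) (y : G) i = cbar (K.mkQ x) y := by
      simp [cbar, bV, Bν, dot_apply]
    rw [hxy]
    conv_lhs => rw [← Basis.sum_repr bas (K.mkQ x)]
    rw [map_sum, LinearMap.sum_apply]
    refine Finset.sum_congr rfl fun i _ => ?_
    rw [map_smul, LinearMap.smul_apply, smul_eq_mul]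
    simp [Basis.coord_apply]
  have hs : s ≤ (m : ℝ) := hrank ν hν m decomp
  have hKm : m + finrank (ZMod p) K = finrank (ZMod p) ↥V :=
    Submodule.finrank_quotient_add_finrank K
  -- step C
  have hfk : finrank (ZMod p) (LinearMap.ker θ) ≤ finrank (ZMod p) K + d := by
    have h2 : finrank (ZMod p) (LinearMap.ker θ) ≤
        finrank (ZMod p) (LinearMap.ker bV) + finrank (ZMod p) (LinearMap.ker Rr) :=
      finrank_ker_comp_le bV Rr
    rw [hkerR] at h2
    exact h2
  -- cards
  have hcard1 : Nat.card {v : G // v ∈ V ∧ ∀ w : S, ∑ j, ν j * β v (w : G) j = 0}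
      = Nat.card ↥(LinearMap.ker θ) := by
    refine Nat.card_congr ⟨fun v => ⟨⟨v.1, v.2.1⟩, (hmemθ _).2 v.2.2⟩,
      fun x => ⟨((x : ↥V) : G), ⟨(x : ↥V).2, (hmemθ _).1 x.2⟩⟩, fun v => rfl, fun x => rfl⟩
  have hcard2 : Nat.card ↥(LinearMap.ker θ) = p ^ finrank (ZMod p) (LinearMap.ker θ) :=
    card_module_eq p _
  have hcard3 : Nat.card ↥V = p ^ finrank (ZMod p) ↥V := card_module_eq p _
  rw [hcard1, hcard2, hcard3]
  have hp1 : (1 : ℝ) ≤ (p : ℝ) := by exact_mod_cast hp.out.one_le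
  have hp0 : (0 : ℝ) < (p : ℝ) := by positivity
  calc ((p ^ finrank (ZMod p) (LinearMap.ker θ) : ℕ) : ℝ)
      = (p : ℝ) ^ ((finrank (ZMod p) (LinearMap.ker θ) : ℕ) : ℝ) := by
        rw [Real.rpow_natCast]; exact_mod_cast rfl
    _ ≤ (p : ℝ) ^ ((finrank (ZMod p) ↥V : ℝ) + (d : ℝ) - s) := by
        apply Real.rpow_le_rpow_of_exponent_le hp1
        have h1 : (finrank (ZMod p) (LinearMap.ker θ) : ℝ) ≤ (finrank (ZMod p) K : ℝ) + d := by
          exact_mod_cast hfk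
        have h2 : (m : ℝ) + (finrank (ZMod p) K : ℝ) = (finrank (ZMod p) ↥V : ℝ) := by
          exact_mod_cast hKm
        linarith
    _ = ((p ^ finrank (ZMod p) ↥V : ℕ) : ℝ) * (p : ℝ) ^ ((d : ℝ) - s) := by
        have he : ((finrank (ZMod p) ↥V : ℝ) + (d : ℝ) - s) =
            (((finrank (ZMod p) ↥V : ℕ) : ℝ)) + ((d : ℝ) - s) := by push_cast; ring
        rw [he, Real.rpow_add hp0, Real.rpow_natCast]
        push_cast
        ring

end KerBound

section Counting

variable {p : ℕ} [hp : Fact p.Prime]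
    {G : Type} [AddCommGroup G] [Module (ZMod p) G] [Fintype G]

lemma coset_card (V : Submodule (ZMod p) G) (a : G) (ι : Type) [Fintype ι] :
    Nat.card {X : ι → G // ∀ i, X i - a ∈ V} = Nat.card ↥V ^ Fintype.card ι := by
  have e : {X : ι → G // ∀ i, X i - a ∈ V} ≃ (ι → ↥V) :=
    { toFun := fun X i => ⟨X.1 i - a, X.2 i⟩
      invFun := fun v => ⟨fun i => a + (v i : G), fun i => by simp⟩
      left_inv := fun X => by
        ext i
        simp
      right_inv := fun v => by
        ext i
        simp }
  rw [Nat.card_congr e, Nat.card_pi, Finset.prod_const, Finset.card_univ]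

end Counting

section PCount

variable (p : ℕ) [hp : Fact p.Prime]
    (G : Type) [AddCommGroup G] [Module (ZMod p) G] [Fintype G]
    (r : ℕ) (β : G →ₗ[ZMod p] G →ₗ[ZMod p] (Fin r → ZMod p))
    (V : Submodule (ZMod p) G) (s : ℝ)
    (a : G) (S : Submodule (ZMod p) G) (d : ℕ) (k : ℕ)

/-- The auxiliary covering sets. -/
def Pset (l mu : Fin k → Fin r → ZMod p) : Set ((Fin k → G) × (Fin k → G)) :=
  {xy | (∀ i, xy.1 i - a ∈ V) ∧ (∀ i, xy.2 i - a ∈ V) ∧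
    (∀ w : S, (∑ i, ∑ j, l i j * β (xy.1 i) (w : G) j) =
      ∑ i, ∑ j, mu i j * β (xy.2 i) (w : G) j) ∧
    (∃ w : S, (∑ i, ∑ j, l i j * β (xy.1 i) (w : G) j) ≠ 0)}

lemma Pset_count
    (hrank : ∀ lam : Fin r → ZMod p, lam ≠ 0 →
      ∀ m : ℕ, HasBilinRankDecomp (fun x y : V => ∑ i, lam i * β (x : G) (y : G) i) m →
        s ≤ (m : ℝ))
    (hSV : S ≤ V)
    (hcodim : Module.finrank (ZMod p) V = Module.finrank (ZMod p) S + d)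
    (hk : 0 < k) (l mu : Fin k → Fin r → ZMod p) :
    ((Pset p G r β V a S k l mu).ncard : ℝ) ≤
      (Nat.card ↥V : ℝ) ^ (2 * k) * (p : ℝ) ^ ((d : ℝ) - s) := by
  classical
  by_cases hmu : mu = 0
  · have : Pset p G r β V a S k l mu = ∅ := by
      ext xy
      simp only [Pset, Set.mem_setOf_eq, Set.mem_empty_iff_false, iff_false, not_and]
      intro _ _ heq
      push_neg
      intro w
      rw [heq w, hmu]
      simp
    rw [this]
    simp only [Set.ncard_empty, Nat.cast_zero]
    positivity
  · obtain ⟨i0, hi0⟩ : ∃ i0, mu i0 ≠ 0 := by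
      by_contra h
      push_neg at h
      exact hmu (funext fun i => h i)
    set ν := mu i0 with hν
    set KT := {v : G // v ∈ V ∧ ∀ w : S, ∑ j, ν j * β v (w : G) j = 0} with hKT
    set P := Pset p G r β V a S k l mu with hP
    have hPfin : P.Finite := Set.toFinite _
    -- the projection forgetting the i0 coordinate of the second vector
    set f : (Fin k → G) × (Fin k → G) → (Fin k → G) × ({i : Fin k // i ≠ i0} → G) :=
      fun xy => (xy.1, fun i => xy.2 i.1) with hf
    have key : hPfin.toFinset.card ≤ Nat.card KT * (hPfin.toFinset.image f).card := by
      apply Finset.card_le_mul_card_image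
      intro b hb
      obtain ⟨xy0, hxy0, hfxy0⟩ := Finset.mem_image.1 hb
      rw [Set.Finite.mem_toFinset] at hxy0
      have hfx0 : ∀ xy ∈ hPfin.toFinset.filter (fun xy => f xy = b),
          xy.1 = xy0.1 ∧ (∀ i, i ≠ i0 → xy.2 i = xy0.2 i) ∧ xy ∈ P := by
        intro xy hxy
        rw [Finset.mem_filter, Set.Finite.mem_toFinset] at hxy
        have hfeq : f xy = f xy0 := by rw [hxy.2, hfxy0]
        simp only [f, Prod.mk.injEq] at hfeq
        exact ⟨hfeq.1, fun i hi => congrFun hfeq.2 ⟨i, hi⟩, hxy.1⟩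
      have hdiff : ∀ xy ∈ hPfin.toFinset.filter (fun xy => f xy = b),
          (xy.2 i0 - xy0.2 i0 ∈ V ∧
            ∀ w : S, ∑ j, ν j * β (xy.2 i0 - xy0.2 i0) (w : G) j = 0) := by
        intro xy hxy
        obtain ⟨hx1, hoff, hxyP⟩ := hfx0 xy hxy
        obtain ⟨hPa, hPb, hPc, -⟩ := hxyP
        obtain ⟨hQa, hQb, hQc, -⟩ := hxy0
        constructor
        · have := sub_mem (hPb i0) (hQb i0)
          rwa [sub_sub_sub_cancel_right] at this
        · intro w
          have heq : ∀ w : S, (∑ i, ∑ j, mu i j * β (xy.2 i) (w : G) j) =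
              ∑ i, ∑ j, mu i j * β (xy0.2 i) (w : G) j := by
            intro w
            rw [← hPc w, ← hQc w, hx1]
          have h1 : ∑ i, ((∑ j, mu i j * β (xy.2 i) (w : G) j) -
              ∑ j, mu i j * β (xy0.2 i) (w : G) j) = 0 := by
            rw [Finset.sum_sub_distrib, heq w, sub_self]
          rw [Finset.sum_eq_single i0] at h1
          · have h3 : ∑ j, ν j * β (xy.2 i0 - xy0.2 i0) (w : G) j
                = (∑ j, mu i0 j * β (xy.2 i0) (w : G) j) -
                  ∑ j, mu i0 j * β (xy0.2 i0) (w : G) j := by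
              rw [← Finset.sum_sub_distrib]
              refine Finset.sum_congr rfl fun j _ => ?_
              rw [hν, ← mul_sub, map_sub, LinearMap.sub_apply, Pi.sub_apply]
            rw [h3, h1]
          · intro i _ hi
            rw [hoff i hi, sub_self]
          · intro h
            exact absurd (Finset.mem_univ i0) h
      have hKTcard : (Finset.univ.filter
          (fun v : G => v ∈ V ∧ ∀ w : S, ∑ j, ν j * β v (w : G) j = 0)).card
          = Nat.card KT := by
        rw [← Fintype.card_subtype, Nat.card_eq_fintype_card]
      rw [← hKTcard]
      apply Finset.card_le_card_of_injOn (fun xy => xy.2 i0 - xy0.2 i0)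
      · intro xy hxy
        rw [Finset.mem_coe, Finset.mem_filter]
        exact ⟨Finset.mem_univ _, hdiff xy hxy⟩
      · intro xy hxy xy' hxy' hval
        rw [Finset.mem_coe] at hxy hxy'
        obtain ⟨hx1, hoff, -⟩ := hfx0 xy hxy
        obtain ⟨hx1', hoff', -⟩ := hfx0 xy' hxy'
        have h20 : xy.2 i0 = xy'.2 i0 := by
          have : xy.2 i0 - xy0.2 i0 = xy'.2 i0 - xy0.2 i0 := hval
          exact sub_left_injective this
        have h2 : xy.2 = xy'.2 := by
          funext i
          by_cases hi : i = i0
          · rw [hi, h20]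
          · rw [hoff i hi, hoff' i hi]
        exact Prod.ext (hx1.trans hx1'.symm) h2
    -- bound the image cardinality
    have himg : (hPfin.toFinset.image f).card ≤
        Nat.card ↥V ^ k * Nat.card ↥V ^ (k - 1) := by
      have hsub : hPfin.toFinset.image f ⊆
          (Finset.univ.filter (fun X : Fin k → G => ∀ i, X i - a ∈ V)) ×ˢ
          (Finset.univ.filter (fun Z : {i : Fin k // i ≠ i0} → G => ∀ i, Z i - (a : G) ∈ V)) := by
        intro b hb
        obtain ⟨xy, hxy, rfl⟩ := Finset.mem_image.1 hb
        rw [Set.Finite.mem_toFinset] at hxy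
        obtain ⟨hPa, hPb, -, -⟩ := hxy
        rw [Finset.mem_product]
        constructor
        · rw [Finset.mem_filter]
          exact ⟨Finset.mem_univ _, hPa⟩
        · rw [Finset.mem_filter]
          exact ⟨Finset.mem_univ _, fun i => hPb i.1⟩
      refine le_trans (Finset.card_le_card hsub) ?_
      rw [Finset.card_product]
      apply Nat.mul_le_mul
      · rw [← Fintype.card_subtype, ← Nat.card_eq_fintype_card, coset_card V a (Fin k)]
        simp
      · rw [← Fintype.card_subtype, ← Nat.card_eq_fintype_card,
          coset_card V a {i : Fin k // i ≠ i0}]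
        have : Fintype.card {i : Fin k // i ≠ i0} = k - 1 := by
          simp [Fintype.card_subtype_compl]
        rw [this]
    -- put it together
    have hkey2 : P.ncard ≤ Nat.card KT * (Nat.card ↥V ^ k * Nat.card ↥V ^ (k - 1)) := by
      rw [Set.ncard_eq_toFinset_card P hPfin]
      exact le_trans key (Nat.mul_le_mul_left _ himg)
    have hKb : ((Nat.card KT : ℕ) : ℝ) ≤ (Nat.card ↥V : ℝ) * (p : ℝ) ^ ((d : ℝ) - s) :=
      ker_bound p G r β V s S d hrank hSV hcodim ν hi0
    have hcast : ((P.ncard : ℕ) : ℝ) ≤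
        (Nat.card KT : ℝ) * ((Nat.card ↥V : ℝ) ^ k * (Nat.card ↥V : ℝ) ^ (k - 1)) := by
      exact_mod_cast hkey2
    refine le_trans hcast ?_
    have hnn : (0 : ℝ) ≤ (Nat.card ↥V : ℝ) ^ k * (Nat.card ↥V : ℝ) ^ (k - 1) := by positivity
    have h5 : (Nat.card KT : ℝ) * ((Nat.card ↥V : ℝ) ^ k * (Nat.card ↥V : ℝ) ^ (k - 1)) ≤
        ((Nat.card ↥V : ℝ) * (p : ℝ) ^ ((d : ℝ) - s)) *
          ((Nat.card ↥V : ℝ) ^ k * (Nat.card ↥V : ℝ) ^ (k - 1)) :=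
      mul_le_mul_of_nonneg_right hKb hnn
    refine le_trans h5 (le_of_eq ?_)
    have h2k : 2 * k = k + (k - 1) + 1 := by omega
    rw [h2k, pow_add, pow_add, pow_one]
    ring

end PCount

section Factor

lemma lin_pi_sum {R : Type*} [CommSemiring R] {ι : Type*} [Fintype ι] [DecidableEq ι]
    {M : ι → Type*} [∀ i, AddCommMonoid (M i)] [∀ i, Module R (M i)]
    {N : Type*} [AddCommMonoid N] [Module R N]
    (ℓ : (∀ i, M i) →ₗ[R] N) (v : ∀ i, M i) : ℓ v = ∑ i, ℓ (Pi.single i (v i)) := by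
  conv_lhs => rw [← Finset.univ_sum_single v]
  rw [map_sum]

variable {p : ℕ} [hp : Fact p.Prime]
    {G : Type} [AddCommGroup G] [Module (ZMod p) G] [Fintype G]
    {r : ℕ} (β : G →ₗ[ZMod p] G →ₗ[ZMod p] (Fin r → ZMod p))
    {S : Submodule (ZMod p) G} {k : ℕ}

lemma factor_side (X : Fin k → G) (φ : Module.Dual (ZMod p) ↥S)
    (hφ : ∀ w : ↥S, (∀ i, β (X i) (w : G) = 0) → φ w = 0) :
    ∃ l : Fin k → Fin r → ZMod p,
      ∀ w : ↥S, φ w = ∑ i, ∑ j, l i j * β (X i) (w : G) j := by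
  classical
  let B : ↥S →ₗ[ZMod p] (Fin k → Fin r → ZMod p) :=
    LinearMap.pi (fun i => (β (X i)) ∘ₗ S.subtype)
  have hBapp : ∀ (w : ↥S) i, B w i = β (X i) (w : G) := fun w i => rfl
  have hker : LinearMap.ker B ≤ LinearMap.ker φ := by
    intro w hw
    rw [LinearMap.mem_ker] at hw ⊢
    exact hφ w fun i => by rw [← hBapp w i, hw]; rfl
  let φq := (LinearMap.ker B).liftQ φ hker
  let Bq := (LinearMap.ker B).liftQ B le_rfl
  have hinj : LinearMap.ker Bq = ⊥ := Submodule.ker_liftQ_eq_bot _ _ _ le_rfl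
  obtain ⟨g, hg⟩ := Bq.exists_leftInverse_of_injective hinj
  set ℓ : (Fin k → Fin r → ZMod p) →ₗ[ZMod p] ZMod p := φq ∘ₗ g with hℓ
  have hfact : ∀ w : ↥S, φ w = ℓ (B w) := by
    intro w
    have h1 : B w = Bq ((LinearMap.ker B).mkQ w) := rfl
    have h2 : g (Bq ((LinearMap.ker B).mkQ w)) = (LinearMap.ker B).mkQ w := by
      have := LinearMap.ext_iff.1 hg ((LinearMap.ker B).mkQ w)
      simpa using this
    calc φ w = φq ((LinearMap.ker B).mkQ w) := rfl
      _ = φq (g (Bq ((LinearMap.ker B).mkQ w))) := by rw [h2]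
      _ = ℓ (B w) := by rw [hℓ, LinearMap.comp_apply, h1]
  refine ⟨fun i j => ℓ (Pi.single i (Pi.single j 1)), fun w => ?_⟩
  rw [hfact w, lin_pi_sum ℓ (B w)]
  refine Finset.sum_congr rfl fun i _ => ?_
  have hsingle : ∀ x : Fin r → ZMod p,
      ℓ (Pi.single i x) = (ℓ ∘ₗ LinearMap.single (ZMod p) (fun _ => Fin r → ZMod p) i) x :=
    fun x => rfl
  rw [hsingle, lin_pi_sum]
  refine Finset.sum_congr rfl fun j _ => ?_
  have h3 : (Pi.single j (B w i j) : Fin r → ZMod p)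
      = (B w i j) • (Pi.single j (1 : ZMod p) : Fin r → ZMod p) := by
    rw [← Pi.single_smul, smul_eq_mul, mul_one]
  rw [h3, map_smul, smul_eq_mul]
  show B w i j * ℓ (Pi.single i (Pi.single j 1)) = _
  have h5 : B w i j = β (X i) (w : G) j := rfl
  rw [h5]
  exact mul_comm _ _

end Factor

/-- Let `β : G × G → F_p^r` be bilinear, with every nonzero combination `λ·β` of rank at
least `s` on `V × V`; let `B_{x·} = {y ∈ V : β(x,y) = 0}` for `x ∈ a + V`, and let `S ≤ V`
have codimension `d` in `V`.  Then `(S ∩ B_{x₁·} ∩ … ∩ B_{x_k·}) + (S ∩ B_{y₁·} ∩ … ∩ B_{y_k·}) = S`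
for all but at most `81·p^{2d+4kr-s/4}·|V|^{2k}` choices of `(x,y) ∈ (a+V)^{2k}`. -/
theorem subspace_sums_regularity (p : ℕ) [hp : Fact p.Prime]
    (G : Type) [AddCommGroup G] [Module (ZMod p) G] [Fintype G]
    (r : ℕ) (β : G →ₗ[ZMod p] G →ₗ[ZMod p] (Fin r → ZMod p))
    (V : Submodule (ZMod p) G) (s : ℝ)
    (hrank : ∀ lam : Fin r → ZMod p, lam ≠ 0 →
      ∀ m : ℕ, HasBilinRankDecomp (fun x y : V => ∑ i, lam i * β (x : G) (y : G) i) m →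
        s ≤ (m : ℝ))
    (a : G) (S : Submodule (ZMod p) G) (hSV : S ≤ V) (d : ℕ)
    (hcodim : Module.finrank (ZMod p) V = Module.finrank (ZMod p) S + d)
    (k : ℕ) (hk : 0 < k) :
    (({ xy : (Fin k → G) × (Fin k → G) |
        ((∀ i, xy.1 i - a ∈ V) ∧ (∀ i, xy.2 i - a ∈ V)) ∧
        ¬ ((S ⊓ ⨅ i, V ⊓ LinearMap.ker (β (xy.1 i))) ⊔
            (S ⊓ ⨅ i, V ⊓ LinearMap.ker (β (xy.2 i))) = S) } :
      Set ((Fin k → G) × (Fin k → G))).ncard : ℝ) ≤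
      81 * (p : ℝ) ^ ((2 * (d : ℝ) + 4 * k * r) - s / 4) * (Nat.card ↥V : ℝ) ^ (2 * k) := by
  classical
  set Bad : Set ((Fin k → G) × (Fin k → G)) := { xy : (Fin k → G) × (Fin k → G) |
        ((∀ i, xy.1 i - a ∈ V) ∧ (∀ i, xy.2 i - a ∈ V)) ∧
        ¬ ((S ⊓ ⨅ i, V ⊓ LinearMap.ker (β (xy.1 i))) ⊔
            (S ⊓ ⨅ i, V ⊓ LinearMap.ker (β (xy.2 i))) = S) } with hBadDef
  have hp1 : (1 : ℝ) ≤ (p : ℝ) := by exact_mod_cast hp.out.one_le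
  have hp0 : (0 : ℝ) < (p : ℝ) := by positivity
  -- the trivial bound
  have htrivial : (Bad.ncard : ℝ) ≤ (Nat.card ↥V : ℝ) ^ (2 * k) := by
    set T : Set ((Fin k → G) × (Fin k → G)) :=
      {xy | (∀ i, xy.1 i - a ∈ V) ∧ (∀ i, xy.2 i - a ∈ V)} with hT
    have hsub : Bad ⊆ T := fun xy hxy => hxy.1
    have h1 : Bad.ncard ≤ T.ncard := Set.ncard_le_ncard hsub (Set.toFinite T)
    have h2 : T.ncard = Nat.card ↥V ^ (2 * k) := by
      rw [← Nat.card_coe_set_eq]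
      have e : ↥T ≃ {X : Fin k → G // ∀ i, X i - a ∈ V} × {Y : Fin k → G // ∀ i, Y i - a ∈ V} :=
        { toFun := fun t => (⟨t.1.1, t.2.1⟩, ⟨t.1.2, t.2.2⟩)
          invFun := fun q => ⟨(q.1.1, q.2.1), ⟨q.1.2, q.2.2⟩⟩
          left_inv := fun t => rfl
          right_inv := fun q => rfl }
      rw [Nat.card_congr e, Nat.card_prod, coset_card V a (Fin k), Fintype.card_fin,
        two_mul, pow_add]
    calc (Bad.ncard : ℝ) ≤ (T.ncard : ℝ) := by exact_mod_cast h1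
      _ = _ := by rw [h2]; push_cast; ring
  -- the covering
  have hcover : Bad ⊆ ⋃ q : (Fin k → Fin r → ZMod p) × (Fin k → Fin r → ZMod p),
      Pset p G r β V a S k q.1 q.2 := by
    rintro ⟨X, Y⟩ ⟨⟨hXV, hYV⟩, hbad⟩
    set WX := S ⊓ ⨅ i, V ⊓ LinearMap.ker (β (X i)) with hWX
    set WY := S ⊓ ⨅ i, V ⊓ LinearMap.ker (β (Y i)) with hWY
    have hWle : WX ⊔ WY ≤ S := sup_le inf_le_left inf_le_left
    set W : Submodule (ZMod p) ↥S := (WX ⊔ WY).comap S.subtype with hW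
    have hWne : W < ⊤ := by
      refine lt_of_le_of_ne le_top fun h => hbad ?_
      apply le_antisymm hWle
      intro x hx
      have hmem : (⟨x, hx⟩ : ↥S) ∈ W := h ▸ Submodule.mem_top
      rw [hW, Submodule.mem_comap] at hmem
      exact hmem
    obtain ⟨φ, hφne, hφbot⟩ := Submodule.exists_dual_map_eq_bot_of_lt_top hWne inferInstance
    have hφW : ∀ w ∈ W, φ w = 0 := by
      intro w hw
      have hmem : φ w ∈ W.map φ := Submodule.mem_map_of_mem hw
      rw [hφbot, Submodule.mem_bot] at hmem
      exact hmem
    have hφX : ∀ w : ↥S, (∀ i, β (X i) (w : G) = 0) → φ w = 0 := by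
      intro w hwz
      apply hφW
      rw [hW, Submodule.mem_comap]
      apply le_sup_left (α := Submodule (ZMod p) G) (a := WX) (b := WY)
      exact Submodule.mem_inf.2 ⟨w.2, (Submodule.mem_iInf _).2 fun i =>
        Submodule.mem_inf.2 ⟨hSV w.2, LinearMap.mem_ker.2 (hwz i)⟩⟩
    have hφY : ∀ w : ↥S, (∀ i, β (Y i) (w : G) = 0) → φ w = 0 := by
      intro w hwz
      apply hφW
      rw [hW, Submodule.mem_comap]
      apply le_sup_right (α := Submodule (ZMod p) G) (a := WX) (b := WY)
      exact Submodule.mem_inf.2 ⟨w.2, (Submodule.mem_iInf _).2 fun i =>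
        Submodule.mem_inf.2 ⟨hSV w.2, LinearMap.mem_ker.2 (hwz i)⟩⟩
    obtain ⟨l, hl⟩ := factor_side β X φ hφX
    obtain ⟨mu, hm⟩ := factor_side β Y φ hφY
    refine Set.mem_iUnion.2 ⟨(l, mu), hXV, hYV, fun w => by rw [← hl w, ← hm w], ?_⟩
    obtain ⟨w, hw⟩ := DFunLike.ne_iff.1 hφne
    refine ⟨w, ?_⟩
    rw [← hl w]
    simpa using hw
  -- summing the covering bound
  have hmain : (Bad.ncard : ℝ) ≤
      ((p : ℝ) ^ (k * r)) ^ 2 * ((Nat.card ↥V : ℝ) ^ (2 * k) * (p : ℝ) ^ ((d : ℝ) - s)) := by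
    have hBfin : Bad.Finite := Set.toFinite _
    have hstep : Bad.ncard ≤ ∑ q : (Fin k → Fin r → ZMod p) × (Fin k → Fin r → ZMod p),
        (Pset p G r β V a S k q.1 q.2).ncard := by
      rw [Set.ncard_eq_toFinset_card Bad hBfin]
      have hsub : hBfin.toFinset ⊆ Finset.univ.biUnion
          (fun q : (Fin k → Fin r → ZMod p) × (Fin k → Fin r → ZMod p) =>
            (Set.toFinite (Pset p G r β V a S k q.1 q.2)).toFinset) := by
        intro xy hxy
        rw [Set.Finite.mem_toFinset] at hxy
        obtain ⟨q, hq⟩ := Set.mem_iUnion.1 (hcover hxy)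
        exact Finset.mem_biUnion.2 ⟨q, Finset.mem_univ q, (Set.Finite.mem_toFinset _).2 hq⟩
      refine le_trans (Finset.card_le_card hsub) (le_trans (Finset.card_biUnion_le) ?_)
      refine le_of_eq (Finset.sum_congr rfl fun q _ => ?_)
      rw [Set.ncard_eq_toFinset_card _ (Set.toFinite _)]
    have hcast : (Bad.ncard : ℝ) ≤
        ∑ q : (Fin k → Fin r → ZMod p) × (Fin k → Fin r → ZMod p),
          ((Pset p G r β V a S k q.1 q.2).ncard : ℝ) := by exact_mod_cast hstep
    refine le_trans hcast ?_
    have hbound := fun q : (Fin k → Fin r → ZMod p) × (Fin k → Fin r → ZMod p) =>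
      Pset_count p G r β V s a S d k hrank hSV hcodim hk q.1 q.2
    refine le_trans (Finset.sum_le_sum fun q _ => hbound q) ?_
    rw [Finset.sum_const, Finset.card_univ, nsmul_eq_mul]
    have hcardΛ : (Fintype.card ((Fin k → Fin r → ZMod p) × (Fin k → Fin r → ZMod p)) : ℝ)
        = ((p : ℝ) ^ (k * r)) ^ 2 := by
      rw [Fintype.card_prod, Fintype.card_fun, Fintype.card_fun, ZMod.card, Fintype.card_fin,
        Fintype.card_fin]
      push_cast
      ring
    rw [hcardΛ]
  -- final arithmetic
  rcases le_or_gt 0 s with hs | hs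
  · refine le_trans hmain ?_
    have h1 : ((p : ℝ) ^ (k * r)) ^ 2 * ((Nat.card ↥V : ℝ) ^ (2 * k) * (p : ℝ) ^ ((d : ℝ) - s))
        = ((p : ℝ) ^ ((2 * (k * r) : ℕ) : ℝ) * (p : ℝ) ^ ((d : ℝ) - s)) *
          (Nat.card ↥V : ℝ) ^ (2 * k) := by
      rw [Real.rpow_natCast, ← pow_mul]
      ring
    rw [h1]
    have h2 : (p : ℝ) ^ ((2 * (k * r) : ℕ) : ℝ) * (p : ℝ) ^ ((d : ℝ) - s)
        = (p : ℝ) ^ (((2 * (k * r) : ℕ) : ℝ) + ((d : ℝ) - s)) := (Real.rpow_add hp0 _ _).symm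
    rw [h2]
    have h3 : (p : ℝ) ^ (((2 * (k * r) : ℕ) : ℝ) + ((d : ℝ) - s)) ≤
        (p : ℝ) ^ ((2 * (d : ℝ) + 4 * k * r) - s / 4) := by
      apply Real.rpow_le_rpow_of_exponent_le hp1
      have hd0 : (0 : ℝ) ≤ (d : ℝ) := Nat.cast_nonneg d
      have hkr : (0 : ℝ) ≤ (k : ℝ) * (r : ℝ) := by positivity
      push_cast
      nlinarith
    have hV0 : (0 : ℝ) ≤ (Nat.card ↥V : ℝ) ^ (2 * k) := by positivity
    calc (p : ℝ) ^ (((2 * (k * r) : ℕ) : ℝ) + ((d : ℝ) - s)) * (Nat.card ↥V : ℝ) ^ (2 * k)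
        ≤ (p : ℝ) ^ ((2 * (d : ℝ) + 4 * k * r) - s / 4) * (Nat.card ↥V : ℝ) ^ (2 * k) :=
          mul_le_mul_of_nonneg_right h3 hV0
      _ ≤ 81 * (p : ℝ) ^ ((2 * (d : ℝ) + 4 * k * r) - s / 4) * (Nat.card ↥V : ℝ) ^ (2 * k) := by
          have hr0 : (0 : ℝ) ≤ (p : ℝ) ^ ((2 * (d : ℝ) + 4 * k * r) - s / 4) :=
            le_of_lt (Real.rpow_pos_of_pos hp0 _)
          nlinarith
  · refine le_trans htrivial ?_
    have h4 : (1 : ℝ) ≤ 81 * (p : ℝ) ^ ((2 * (d : ℝ) + 4 * k * r) - s / 4) := by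
      have h5 : (1 : ℝ) ≤ (p : ℝ) ^ ((2 * (d : ℝ) + 4 * k * r) - s / 4) := by
        apply Real.one_le_rpow hp1
        have : (0:ℝ) ≤ 2 * (d : ℝ) + 4 * k * r := by positivity
        linarith
      linarith
    have hV0 : (0 : ℝ) ≤ (Nat.card ↥V : ℝ) ^ (2 * k) := by positivity
    calc (Nat.card ↥V : ℝ) ^ (2 * k) = 1 * (Nat.card ↥V : ℝ) ^ (2 * k) := by ring
      _ ≤ (81 * (p : ℝ) ^ ((2 * (d : ℝ) + 4 * k * r) - s / 4)) * (Nat.card ↥V : ℝ) ^ (2 * k) :=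
          mul_le_mul_of_nonneg_right h4 hV0
      _ = _ := by ring
end

section
/- There is an absolute constant K > 0 (allowed to depend on p) such that the following holds. Let G, H be finite-dimensional F_p-vector spaces, V ≤ G a subspace, t ∈ G, and β : G × G → F_p^r a bilinear map such that for every nonzero λ ∈ F_p^r the bilinear form (u,v) ↦ λ·β(u,v) restricted to V × V has rank at least R. Let X ⊆ t + V; for x ∈ X put U_x = {y ∈ V : β(x,y) = 0} and let φ_x : U_x → H be a linear map. Say a quadruple (x_1,x_2,x_3,x_4) of elements of X with x_1 − x_2 = x_3 − x_4 is respected if φ_{x_1}(y) − φ_{x_2}(y) − φ_{x_3}(y) + φ_{x_4}(y) = 0 for all y ∈ U_{x_1} ∩ U_{x_2} ∩ U_{x_3} ∩ U_{x_4}. Suppose x, x+a, y, y+a ∈ X are points for which there are at least c'|V|^k tuples (z_1,...,z_k) ∈ (X ∩ (t+V))^k with z_1+a,...,z_k+a ∈ X such that the quadruples (x+a, x, z_1+a, z_1), (z_i+a, z_i, z_{i+1}+a, z_{i+1}) for 1 ≤ i ≤ k−1, and (y+a, y, z_k+a, z_k) are all respected. If R ≥ K·(kr + log(10(c')^{−1})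 + 1), then the quadruple (x+a, x, y+a, y) is also respected. -/
/-- A quadruple `(x₁,x₂,x₃,x₄)` is subspace-respected by the system of partially defined
linear maps `φ_x : U_x → H` if `φ_{x₁} - φ_{x₂} - φ_{x₃} + φ_{x₄}` vanishes on
`U_{x₁} ∩ U_{x₂} ∩ U_{x₃} ∩ U_{x₄}`. -/
def SubspaceRespected {p : ℕ} {G H : Type*} [AddCommGroup G] [Module (ZMod p) G]
    [AddCommGroup H] [Module (ZMod p) H] (U : G → Submodule (ZMod p) G)
    (φ : (x : G) → (↥(U x) →ₗ[ZMod p] H)) (x₁ x₂ x₃ x₄ : G) : Prop :=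
  ∀ (y : G) (h₁ : y ∈ U x₁) (h₂ : y ∈ U x₂) (h₃ : y ∈ U x₃) (h₄ : y ∈ U x₄),
    φ x₁ ⟨y, h₁⟩ - φ x₂ ⟨y, h₂⟩ - φ x₃ ⟨y, h₃⟩ + φ x₄ ⟨y, h₄⟩ = 0

open Module LinearMap

set_option synthInstance.maxHeartbeats 1000000
set_option maxHeartbeats 2000000

variable {p : ℕ} [Fact p.Prime]

/-- codimension of intersection with a kernel -/
lemma auxInfKer {M : Type*} [AddCommGroup M] [Module (ZMod p) M]
    [Module.Finite (ZMod p) M] (A : Submodule (ZMod p) M) {r : ℕ}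
    (f : M →ₗ[ZMod p] (Fin r → ZMod p)) :
    finrank (ZMod p) A ≤ finrank (ZMod p) ↥(A ⊓ LinearMap.ker f) + r := by
  have h1 := LinearMap.finrank_range_add_finrank_ker (f.comp A.subtype)
  have h2 : finrank (ZMod p) ↥(LinearMap.range (f.comp A.subtype)) ≤ r := by
    have := Submodule.finrank_le (LinearMap.range (f.comp A.subtype))
    simpa using this
  have h3 : finrank (ZMod p) ↥(LinearMap.ker (f.comp A.subtype))
      = finrank (ZMod p) ↥(A ⊓ LinearMap.ker f) := by
    rw [LinearMap.ker_comp,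
      ← Submodule.finrank_map_subtype_eq A (Submodule.comap A.subtype (LinearMap.ker f)),
      Submodule.map_comap_subtype]
  omega

/-- rank of composition bound -/
lemma auxComp {K M N P : Type*} [Field K] [AddCommGroup M] [Module K M]
    [AddCommGroup N] [Module K N] [FiniteDimensional K N]
    [AddCommGroup P] [Module K P]
    (f : M →ₗ[K] N) (g : N →ₗ[K] P) :
    finrank K ↥(LinearMap.range f) ≤
      finrank K ↥(LinearMap.range (g.comp f)) + finrank K ↥(LinearMap.ker g) := by
  have h1 := LinearMap.finrank_range_add_finrank_ker (g.domRestrict (LinearMap.range f))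
  have h2 : LinearMap.range (g.domRestrict (LinearMap.range f))
      = LinearMap.range (g.comp f) := by
    rw [LinearMap.range_domRestrict, LinearMap.range_comp]
  have h3 : finrank K ↥(LinearMap.ker (g.domRestrict (LinearMap.range f)))
      ≤ finrank K ↥(LinearMap.ker g) := by
    have e1 : LinearMap.ker (g.domRestrict (LinearMap.range f))
        = Submodule.comap (LinearMap.range f).subtype (LinearMap.ker g) := by
      rw [LinearMap.domRestrict, LinearMap.ker_comp]
    rw [e1, ← Submodule.finrank_map_subtype_eq (LinearMap.range f), Submodule.map_comap_subtype]
    exact Submodule.finrank_mono inf_le_right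
  rw [h2] at h1
  omega

/-- decomposition of a bilinear form with rank = finrank of range of the associated map -/
lemma auxDecomp {K Vt : Type*} [Field K] [AddCommGroup Vt] [Module K Vt]
    [FiniteDimensional K Vt] (B : Vt →ₗ[K] (Vt →ₗ[K] K)) :
    HasBilinRankDecomp (fun u v : Vt => B u v)
      (finrank K ↥(LinearMap.range B)) := by
  classical
  haveI : Module.Free K ↥(LinearMap.range B) := Module.Free.of_divisionRing K ↥(LinearMap.range B)
  let bE := Module.finBasis K ↥(LinearMap.range B)
  refine ⟨fun i => (LinearMap.proj i).comp
      (bE.equivFun.toLinearMap.comp (B.rangeRestrict)),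
    fun i => ((bE i : ↥(LinearMap.range B)) : (Vt →ₗ[K] K)), ?_⟩
  intro u v
  have h := bE.sum_equivFun (B.rangeRestrict u)
  have h2 : ((B.rangeRestrict u : ↥(LinearMap.range B)) : (Vt →ₗ[K] K)) = B u := rfl
  calc B u v = ((B.rangeRestrict u : ↥(LinearMap.range B)) : (Vt →ₗ[K] K)) v := rfl
    _ = ((∑ i, bE.equivFun (B.rangeRestrict u) i • bE i : ↥(LinearMap.range B)) : (Vt →ₗ[K] K)) v := by
        rw [h]
    _ = ∑ i, bE.equivFun (B.rangeRestrict u) i * ((bE i : ↥(LinearMap.range B)) : (Vt →ₗ[K] K)) v := by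
        rw [Submodule.coe_sum]
        simp [LinearMap.sum_apply, smul_eq_mul]

/-- the linear form `v ↦ ∑ j, lam j * v j` -/
noncomputable def mkMu {K : Type*} [Field K] {r : ℕ} (lam : Fin r → K) :
    (Fin r → K) →ₗ[K] K := ∑ j, lam j • LinearMap.proj j

lemma mkMu_apply {K : Type*} [Field K] {r : ℕ} (lam v : Fin r → K) :
    mkMu lam v = ∑ j, lam j * v j := by
  simp [mkMu, LinearMap.sum_apply, smul_eq_mul]

/-- `g ↦ mu ∘ β g ∘ j` as a linear map -/
noncomputable def mkL {K G M : Type*} [Field K] [AddCommGroup G] [Module K G]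
    [AddCommGroup M] [Module K M] {r : ℕ}
    (β : G →ₗ[K] G →ₗ[K] (Fin r → K)) (mu : (Fin r → K) →ₗ[K] K) (j : M →ₗ[K] G) :
    G →ₗ[K] (M →ₗ[K] K) where
  toFun g := mu.comp ((β g).comp j)
  map_add' g g' := by ext m; simp
  map_smul' c g := by ext m; simp

lemma mkL_apply {K G M : Type*} [Field K] [AddCommGroup G] [Module K G]
    [AddCommGroup M] [Module K M] {r : ℕ}
    (β : G →ₗ[K] G →ₗ[K] (Fin r → K)) (mu : (Fin r → K) →ₗ[K] K) (j : M →ₗ[K] G)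
    (g : G) (m : M) : mkL β mu j g m = mu (β g (j m)) := rfl

lemma auxRank {G : Type} [AddCommGroup G] [Module (ZMod p) G] [Fintype G]
    (V : Submodule (ZMod p) G) {r : ℕ}
    (β : G →ₗ[ZMod p] G →ₗ[ZMod p] (Fin r → ZMod p)) (R : ℝ)
    (hrank : ∀ lam : Fin r → ZMod p, lam ≠ 0 → ∀ m : ℕ,
      HasBilinRankDecomp (fun u v : V => ∑ i, lam i * β (u : G) (v : G) i) m → R ≤ (m : ℝ))
    (W : Submodule (ZMod p) ↥V)
    (hW : finrank (ZMod p) ↥V ≤ finrank (ZMod p) ↥W + 4*r)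
    (lam : Fin r → ZMod p) (hlam : lam ≠ 0) :
    R ≤ (finrank (ZMod p) ↥(LinearMap.range
        ((mkL β (mkMu lam) (V.subtype.comp W.subtype)).comp V.subtype)) : ℝ) + 4*r := by
  classical
  let B : ↥V →ₗ[ZMod p] (↥V →ₗ[ZMod p] ZMod p) := (mkL β (mkMu lam) V.subtype).comp V.subtype
  have hd := auxDecomp B
  have heq : (fun u v : V => ∑ i, lam i * β (u : G) (v : G) i) = fun u v : ↥V => B u v := by
    funext u v
    simp only [B, LinearMap.comp_apply, mkL_apply, mkMu_apply]
    exact Finset.sum_congr rfl fun j _ => rfl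
  rw [← heq] at hd
  have h1 : R ≤ (finrank (ZMod p) ↥(LinearMap.range B) : ℝ) := hrank lam hlam _ hd
  have h2 : finrank (ZMod p) ↥(LinearMap.range B) ≤
      finrank (ZMod p) ↥(LinearMap.range (W.dualRestrict.comp B)) +
        finrank (ZMod p) ↥(LinearMap.ker (W.dualRestrict)) := auxComp B W.dualRestrict
  have h3 : W.dualRestrict.comp B
      = (mkL β (mkMu lam) (V.subtype.comp W.subtype)).comp V.subtype := by
    ext v w
    simp [B, Submodule.dualRestrict_apply, mkL_apply]
  have h4 : finrank (ZMod p) ↥(LinearMap.ker (W.dualRestrict)) ≤ 4*r := by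
    rw [Submodule.dualRestrict_ker_eq_dualAnnihilator]
    have e : finrank (ZMod p) (↥V ⧸ W) = finrank (ZMod p) ↥(Submodule.dualAnnihilator W) :=
      LinearEquiv.finrank_eq (Subspace.quotEquivAnnihilator W)
    have e2 := Submodule.finrank_quotient_add_finrank W
    omega
  rw [h3] at h2
  have := le_trans h1 (by exact_mod_cast Nat.cast_le.mpr h2 : (finrank (ZMod p) ↥(LinearMap.range B) : ℝ) ≤ _)
  calc R ≤ _ := this
    _ ≤ _ := by
      push_cast
      have : (finrank (ZMod p) ↥(LinearMap.ker (W.dualRestrict)) : ℝ) ≤ 4*r := by exact_mod_cast h4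
      linarith

lemma auxCard {G : Type} [AddCommGroup G] [Module (ZMod p) G] [Fintype G]
    (V : Submodule (ZMod p) G) {M : Type*} [AddCommGroup M] [Module (ZMod p) M]
    [Module.Finite (ZMod p) M]
    (Lv : ↥V →ₗ[ZMod p] M) (R : ℝ) (rr : ℕ)
    (hp1 : 1 < p)
    (hR : R ≤ (finrank (ZMod p) ↥(LinearMap.range Lv) : ℝ) + rr) :
    (Nat.card ↥(LinearMap.ker Lv) : ℝ) ≤
      (Nat.card ↥V : ℝ) * (p:ℝ)^(rr:ℕ) * (p:ℝ) ^ (-R) := by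
  classical
  have hp0 : (0:ℝ) < p := by positivity
  have h1 := LinearMap.finrank_range_add_finrank_ker Lv
  have hker : Nat.card ↥(LinearMap.ker Lv) = p ^ (finrank (ZMod p) ↥(LinearMap.ker Lv)) := by
    rw [Nat.card_eq_fintype_card, card_eq_pow_finrank (K := ZMod p), ZMod.card]
  have hV : Nat.card ↥V = p ^ (finrank (ZMod p) ↥V) := by
    rw [Nat.card_eq_fintype_card, card_eq_pow_finrank (K := ZMod p), ZMod.card]
  rw [hker, hV]
  have key : ((p:ℝ) ^ (finrank (ZMod p) ↥(LinearMap.ker Lv)) : ℝ)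
      ≤ (p:ℝ) ^ (((finrank (ZMod p) ↥V + rr : ℕ) : ℝ) - R) := by
    rw [← Real.rpow_natCast (p:ℝ) (finrank (ZMod p) ↥(LinearMap.ker Lv))]
    apply Real.rpow_le_rpow_of_exponent_le (by exact_mod_cast hp1.le)
    have : (finrank (ZMod p) ↥(LinearMap.range Lv) : ℝ) + finrank (ZMod p) ↥(LinearMap.ker Lv)
        = finrank (ZMod p) ↥V := by exact_mod_cast congrArg (Nat.cast (R := ℝ)) h1
    push_cast
    linarith
  calc ((p ^ finrank (ZMod p) ↥(LinearMap.ker Lv) : ℕ) : ℝ)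
      = (p:ℝ) ^ (finrank (ZMod p) ↥(LinearMap.ker Lv)) := by push_cast; ring
    _ ≤ (p:ℝ) ^ (((finrank (ZMod p) ↥V + rr : ℕ) : ℝ) - R) := key
    _ = ((p ^ finrank (ZMod p) ↥V : ℕ) : ℝ) * (p:ℝ)^(rr:ℕ) * (p:ℝ) ^ (-R) := by
      rw [sub_eq_add_neg, Real.rpow_add hp0, Real.rpow_natCast]
      push_cast
      ring

/-- **Transitivity of respectedness via chains.** If the bilinear map `β` has high rank on
`V × V` and `x, x+a, y, y+a ∈ X` admit at least `c'|V|^k` chains `(z₁,…,z_k)` of respected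
quadruples linking `(x+a,x)` to `(y+a,y)`, then, provided `R ≥ K(kr + log(10c'⁻¹) + 1)`,
the quadruple `(x+a, x, y+a, y)` is itself respected. -/
theorem respected_chains_transitive (p : ℕ) [hp : Fact p.Prime] :
    ∃ K : ℝ, 0 < K ∧
      ∀ (G H : Type) [AddCommGroup G] [Module (ZMod p) G] [Fintype G]
        [AddCommGroup H] [Module (ZMod p) H] [Module.Finite (ZMod p) H]
        (V : Submodule (ZMod p) G) (t : G) (r : ℕ)
        (β : G →ₗ[ZMod p] G →ₗ[ZMod p] (Fin r → ZMod p)) (R : ℝ),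
        (∀ lam : Fin r → ZMod p, lam ≠ 0 →
          ∀ m : ℕ, HasBilinRankDecomp
            (fun u v : V => ∑ i, lam i * β (u : G) (v : G) i) m → R ≤ (m : ℝ)) →
        ∀ (X : Set G), (∀ x ∈ X, x - t ∈ V) →
        ∀ (φ : (x : G) → (↥(V ⊓ LinearMap.ker (β x)) →ₗ[ZMod p] H))
          (x y a : G), x ∈ X → x + a ∈ X → y ∈ X → y + a ∈ X →
        ∀ (k : ℕ) (hk : 0 < k) (c' : ℝ), 0 < c' →
        c' * (Nat.card ↥V : ℝ) ^ k ≤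
          (({ z : Fin k → G |
              (∀ i, z i ∈ X ∧ z i + a ∈ X) ∧
              SubspaceRespected (fun w => V ⊓ LinearMap.ker (β w)) φ
                (x + a) x (z ⟨0, hk⟩ + a) (z ⟨0, hk⟩) ∧
              (∀ (i : ℕ) (h₁ : i < k) (h₂ : i + 1 < k),
                SubspaceRespected (fun w => V ⊓ LinearMap.ker (β w)) φ
                  (z ⟨i, h₁⟩ + a) (z ⟨i, h₁⟩) (z ⟨i + 1, h₂⟩ + a) (z ⟨i + 1, h₂⟩)) ∧
              SubspaceRespected (fun w => V ⊓ LinearMap.ker (β w)) φ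
                (y + a) y (z ⟨k - 1, Nat.sub_lt hk Nat.one_pos⟩ + a)
                (z ⟨k - 1, Nat.sub_lt hk Nat.one_pos⟩) } :
            Set (Fin k → G)).ncard : ℝ) →
        K * ((k : ℝ) * r + Real.log (10 * c'⁻¹) + 1) ≤ R →
        SubspaceRespected (fun w => V ⊓ LinearMap.ker (β w)) φ (x + a) x (y + a) y := by
  refine ⟨7, by norm_num, ?_⟩
  intro G H _ _ _ _ _ _ V t r β R hrank X hX φ x y a hx hxa hy hya k hk c' hc' hcount hR
  classical
  set S : Set (Fin k → G) := { z : Fin k → G |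
              (∀ i, z i ∈ X ∧ z i + a ∈ X) ∧
              SubspaceRespected (fun w => V ⊓ LinearMap.ker (β w)) φ
                (x + a) x (z ⟨0, hk⟩ + a) (z ⟨0, hk⟩) ∧
              (∀ (i : ℕ) (h₁ : i < k) (h₂ : i + 1 < k),
                SubspaceRespected (fun w => V ⊓ LinearMap.ker (β w)) φ
                  (z ⟨i, h₁⟩ + a) (z ⟨i, h₁⟩) (z ⟨i + 1, h₂⟩ + a) (z ⟨i + 1, h₂⟩)) ∧
              SubspaceRespected (fun w => V ⊓ LinearMap.ker (β w)) φ
                (y + a) y (z ⟨k - 1, Nat.sub_lt hk Nat.one_pos⟩ + a)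
                (z ⟨k - 1, Nat.sub_lt hk Nat.one_pos⟩) } with hSdef
  by_contra hcon
  simp only [SubspaceRespected, not_forall] at hcon
  obtain ⟨w₀, hw₁, hw₂, hw₃, hw₄, hwne⟩ := hcon
  -- the subspace W ≤ V
  let k1 : Submodule (ZMod p) ↥V := LinearMap.ker ((β (x+a)).comp V.subtype)
  let k2 : Submodule (ZMod p) ↥V := LinearMap.ker ((β x).comp V.subtype)
  let k3 : Submodule (ZMod p) ↥V := LinearMap.ker ((β (y+a)).comp V.subtype)
  let k4 : Submodule (ZMod p) ↥V := LinearMap.ker ((β y).comp V.subtype)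
  let W : Submodule (ZMod p) ↥V := k1 ⊓ k2 ⊓ k3 ⊓ k4
  have hWmem : ∀ w : ↥V, w ∈ W ↔ β (x+a) (w:G) = 0 ∧ β x (w:G) = 0 ∧
      β (y+a) (w:G) = 0 ∧ β y (w:G) = 0 := by
    intro w
    simp [W, k1, k2, k3, k4, Submodule.mem_inf, LinearMap.mem_ker, and_assoc]
  have hWcodim : Module.finrank (ZMod p) ↥V ≤ Module.finrank (ZMod p) ↥W + 4*r := by
    have i1 : Module.finrank (ZMod p) (⊤ : Submodule (ZMod p) ↥V) ≤
        Module.finrank (ZMod p) ↥(⊤ ⊓ k1) + r := auxInfKer ⊤ ((β (x+a)).comp V.subtype)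
    have i2 : Module.finrank (ZMod p) ↥k1 ≤ Module.finrank (ZMod p) ↥(k1 ⊓ k2) + r :=
      auxInfKer k1 ((β x).comp V.subtype)
    have i3 : Module.finrank (ZMod p) ↥(k1 ⊓ k2) ≤
        Module.finrank (ZMod p) ↥(k1 ⊓ k2 ⊓ k3) + r := auxInfKer (k1 ⊓ k2) ((β (y+a)).comp V.subtype)
    have i4 : Module.finrank (ZMod p) ↥(k1 ⊓ k2 ⊓ k3) ≤
        Module.finrank (ZMod p) ↥W + r := auxInfKer (k1 ⊓ k2 ⊓ k3) ((β y).comp V.subtype)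
    rw [top_inf_eq, ] at i1
    rw [finrank_top] at i1
    omega
  -- inclusion maps and ψ
  have memW1 : ∀ w : ↥W, ((w : ↥V) : G) ∈ V ⊓ LinearMap.ker (β (x+a)) :=
    fun w => ⟨(w : ↥V).2, LinearMap.mem_ker.mpr ((hWmem (w:↥V)).1 w.2).1⟩
  have memW2 : ∀ w : ↥W, ((w : ↥V) : G) ∈ V ⊓ LinearMap.ker (β x) :=
    fun w => ⟨(w : ↥V).2, LinearMap.mem_ker.mpr ((hWmem (w:↥V)).1 w.2).2.1⟩
  have memW3 : ∀ w : ↥W, ((w : ↥V) : G) ∈ V ⊓ LinearMap.ker (β (y+a)) :=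
    fun w => ⟨(w : ↥V).2, LinearMap.mem_ker.mpr ((hWmem (w:↥V)).1 w.2).2.2.1⟩
  have memW4 : ∀ w : ↥W, ((w : ↥V) : G) ∈ V ⊓ LinearMap.ker (β y) :=
    fun w => ⟨(w : ↥V).2, LinearMap.mem_ker.mpr ((hWmem (w:↥V)).1 w.2).2.2.2⟩
  let jmap : ↥W →ₗ[ZMod p] G := V.subtype.comp W.subtype
  let e1 : ↥W →ₗ[ZMod p] ↥(V ⊓ LinearMap.ker (β (x+a))) :=
    LinearMap.codRestrict _ jmap memW1
  let e2 : ↥W →ₗ[ZMod p] ↥(V ⊓ LinearMap.ker (β x)) :=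
    LinearMap.codRestrict _ jmap memW2
  let e3 : ↥W →ₗ[ZMod p] ↥(V ⊓ LinearMap.ker (β (y+a))) :=
    LinearMap.codRestrict _ jmap memW3
  let e4 : ↥W →ₗ[ZMod p] ↥(V ⊓ LinearMap.ker (β y)) :=
    LinearMap.codRestrict _ jmap memW4
  let ψ : ↥W →ₗ[ZMod p] H :=
    (φ (x+a)).comp e1 - (φ x).comp e2 - (φ (y+a)).comp e3 + (φ y).comp e4
  have hψeval : ∀ (w : ↥W) (m1 : ((w:↥V):G) ∈ V ⊓ LinearMap.ker (β (x+a)))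
      (m2 : ((w:↥V):G) ∈ V ⊓ LinearMap.ker (β x))
      (m3 : ((w:↥V):G) ∈ V ⊓ LinearMap.ker (β (y+a)))
      (m4 : ((w:↥V):G) ∈ V ⊓ LinearMap.ker (β y)),
      ψ w = φ (x+a) ⟨((w:↥V):G), m1⟩ - φ x ⟨((w:↥V):G), m2⟩
        - φ (y+a) ⟨((w:↥V):G), m3⟩ + φ y ⟨((w:↥V):G), m4⟩ := fun w m1 m2 m3 m4 => rfl
  -- the witness
  let w₀V : ↥V := ⟨w₀, hw₁.1⟩
  have hw₀W : w₀V ∈ W := (hWmem w₀V).2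
    ⟨LinearMap.mem_ker.mp hw₁.2, LinearMap.mem_ker.mp hw₂.2,
     LinearMap.mem_ker.mp hw₃.2, LinearMap.mem_ker.mp hw₄.2⟩
  let w₀W : ↥W := ⟨w₀V, hw₀W⟩
  have hψw₀ : ψ w₀W ≠ 0 := by
    rw [hψeval w₀W hw₁ hw₂ hw₃ hw₄]
    exact hwne
  obtain ⟨χ, hχ⟩ : ∃ χ : H →ₗ[ZMod p] ZMod p, χ (ψ w₀W) ≠ 0 := by
    by_contra hco
    push_neg at hco
    exact hψw₀ ((Module.forall_dual_apply_eq_zero_iff (ZMod p) (ψ w₀W)).1 hco)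
  let ξ : ↥W →ₗ[ZMod p] ZMod p := χ.comp ψ
  have hξ0 : ξ w₀W ≠ 0 := hχ
  -- the tuple sets
  let Tfin : (Fin k → Fin r → ZMod p) → Finset (Fin k → G) := fun lam =>
    Finset.univ.filter (fun z => (∀ i, z i - t ∈ V) ∧
      (∑ i, mkL β (mkMu (lam i)) jmap (z i)) = ξ)
  have claimA : ∀ z ∈ S, ∃ lam : Fin k → Fin r → ZMod p, lam ≠ 0 ∧ z ∈ Tfin lam := by
    intro z hz
    obtain ⟨hzX, hfirst, hmid, hlast⟩ := hz
    let Lfam : Fin k × Fin r → (↥W →ₗ[ZMod p] ZMod p) := fun ij =>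
      (LinearMap.proj ij.2).comp ((β (z ij.1)).comp jmap)
    have hsub : (⨅ ij, LinearMap.ker (Lfam ij)) ≤ LinearMap.ker ξ := by
      intro w hw
      simp only [Submodule.mem_iInf, LinearMap.mem_ker, Lfam, LinearMap.comp_apply,
        LinearMap.proj_apply] at hw
      have hz0 : ∀ i : Fin k, β (z i) ((w:↥V):G) = 0 := by
        intro i; funext j; exact hw (i, j)
      have hwV : ((w:↥V):G) ∈ V := (w:↥V).2
      obtain ⟨hbxa, hbx, hbya, hby⟩ := (hWmem (w:↥V)).1 w.2
      have hba : β a ((w:↥V):G) = 0 := by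
        have h' : β (x + a) ((w:↥V):G) = β x ((w:↥V):G) + β a ((w:↥V):G) := by
          rw [map_add]; rfl
        rw [hbxa, hbx] at h'
        simpa using h'.symm
      have mem_z : ∀ (i : ℕ) (h : i < k), ((w:↥V):G) ∈ V ⊓ LinearMap.ker (β (z ⟨i, h⟩)) :=
        fun i h => ⟨hwV, LinearMap.mem_ker.mpr (hz0 _)⟩
      have mem_za : ∀ (i : ℕ) (h : i < k), ((w:↥V):G) ∈ V ⊓ LinearMap.ker (β (z ⟨i, h⟩ + a)) :=
        fun i h => ⟨hwV, LinearMap.mem_ker.mpr (by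
          have h' : β (z ⟨i, h⟩ + a) ((w:↥V):G)
              = β (z ⟨i, h⟩) ((w:↥V):G) + β a ((w:↥V):G) := by rw [map_add]; rfl
          rw [h', hz0, hba, add_zero])⟩
      have mem_xa : ((w:↥V):G) ∈ V ⊓ LinearMap.ker (β (x+a)) := ⟨hwV, LinearMap.mem_ker.mpr hbxa⟩
      have mem_x : ((w:↥V):G) ∈ V ⊓ LinearMap.ker (β x) := ⟨hwV, LinearMap.mem_ker.mpr hbx⟩
      have mem_ya : ((w:↥V):G) ∈ V ⊓ LinearMap.ker (β (y+a)) := ⟨hwV, LinearMap.mem_ker.mpr hbya⟩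
      have mem_y : ((w:↥V):G) ∈ V ⊓ LinearMap.ker (β y) := ⟨hwV, LinearMap.mem_ker.mpr hby⟩
      have kk1 : k - 1 < k := Nat.sub_lt hk Nat.one_pos
      have hstep : ∀ (i : ℕ) (h1 : i < k) (h2 : i + 1 < k),
          φ (z ⟨i, h1⟩ + a) ⟨((w:↥V):G), mem_za i h1⟩ - φ (z ⟨i, h1⟩) ⟨((w:↥V):G), mem_z i h1⟩
          = φ (z ⟨i+1, h2⟩ + a) ⟨((w:↥V):G), mem_za (i+1) h2⟩
            - φ (z ⟨i+1, h2⟩) ⟨((w:↥V):G), mem_z (i+1) h2⟩ := by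
        intro i h1 h2
        have e := hmid i h1 h2 ((w:↥V):G) (mem_za i h1) (mem_z i h1) (mem_za (i+1) h2)
          (mem_z (i+1) h2)
        have e2 : (φ (z ⟨i, h1⟩ + a) ⟨((w:↥V):G), mem_za i h1⟩
              - φ (z ⟨i, h1⟩) ⟨((w:↥V):G), mem_z i h1⟩)
            - (φ (z ⟨i+1, h2⟩ + a) ⟨((w:↥V):G), mem_za (i+1) h2⟩
              - φ (z ⟨i+1, h2⟩) ⟨((w:↥V):G), mem_z (i+1) h2⟩) = 0 := by
          rw [← e]; abel
        exact sub_eq_zero.mp e2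
      have hchain : ∀ (i : ℕ) (h : i < k),
          φ (z ⟨0, hk⟩ + a) ⟨((w:↥V):G), mem_za 0 hk⟩ - φ (z ⟨0, hk⟩) ⟨((w:↥V):G), mem_z 0 hk⟩
          = φ (z ⟨i, h⟩ + a) ⟨((w:↥V):G), mem_za i h⟩
            - φ (z ⟨i, h⟩) ⟨((w:↥V):G), mem_z i h⟩ := by
        intro i
        induction i with
        | zero => intro h; rfl
        | succ n ih =>
          intro h
          exact (ih (Nat.lt_of_succ_lt h)).trans (hstep n (Nat.lt_of_succ_lt h) h)
      have efirst := hfirst ((w:↥V):G) mem_xa mem_x (mem_za 0 hk) (mem_z 0 hk)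
      have elast := hlast ((w:↥V):G) mem_ya mem_y (mem_za (k-1) kk1) (mem_z (k-1) kk1)
      have hψw : ψ w = 0 := by
        rw [hψeval w mem_xa mem_x mem_ya mem_y]
        have key : φ (x+a) ⟨((w:↥V):G), mem_xa⟩ - φ x ⟨((w:↥V):G), mem_x⟩
              - φ (y+a) ⟨((w:↥V):G), mem_ya⟩ + φ y ⟨((w:↥V):G), mem_y⟩
            = (φ (x+a) ⟨((w:↥V):G), mem_xa⟩ - φ x ⟨((w:↥V):G), mem_x⟩
                - φ (z ⟨0, hk⟩ + a) ⟨((w:↥V):G), mem_za 0 hk⟩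
                + φ (z ⟨0, hk⟩) ⟨((w:↥V):G), mem_z 0 hk⟩)
              - (φ (y+a) ⟨((w:↥V):G), mem_ya⟩ - φ y ⟨((w:↥V):G), mem_y⟩
                - φ (z ⟨k-1, kk1⟩ + a) ⟨((w:↥V):G), mem_za (k-1) kk1⟩
                + φ (z ⟨k-1, kk1⟩) ⟨((w:↥V):G), mem_z (k-1) kk1⟩)
              + ((φ (z ⟨0, hk⟩ + a) ⟨((w:↥V):G), mem_za 0 hk⟩
                  - φ (z ⟨0, hk⟩) ⟨((w:↥V):G), mem_z 0 hk⟩)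
                - (φ (z ⟨k-1, kk1⟩ + a) ⟨((w:↥V):G), mem_za (k-1) kk1⟩
                  - φ (z ⟨k-1, kk1⟩) ⟨((w:↥V):G), mem_z (k-1) kk1⟩)) := by abel
        have h3 : (φ (z ⟨0, hk⟩ + a) ⟨((w:↥V):G), mem_za 0 hk⟩
              - φ (z ⟨0, hk⟩) ⟨((w:↥V):G), mem_z 0 hk⟩)
            - (φ (z ⟨k-1, kk1⟩ + a) ⟨((w:↥V):G), mem_za (k-1) kk1⟩
              - φ (z ⟨k-1, kk1⟩) ⟨((w:↥V):G), mem_z (k-1) kk1⟩) = 0 :=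
          sub_eq_zero.mpr (hchain (k-1) kk1)
        rw [key, efirst, elast, h3]
        simp
      show ξ w = 0
      have : ξ w = χ (ψ w) := rfl
      rw [this, hψw, map_zero]
    have hspan := mem_span_of_iInf_ker_le_ker (𝕜 := ZMod p) hsub
    obtain ⟨c, hc⟩ := (Submodule.mem_span_range_iff_exists_fun (ZMod p)).1 hspan
    refine ⟨fun i j => c (i, j), ?_, ?_⟩
    · intro h0
      apply hξ0
      rw [← hc]
      have hc0 : ∀ ij : Fin k × Fin r, c ij = 0 := by
        intro ij
        have := congrFun (congrFun h0 ij.1) ij.2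
        simpa using this
      simp [hc0]
    · refine Finset.mem_filter.mpr ⟨Finset.mem_univ _, ⟨fun i => hX _ (hzX i).1, ?_⟩⟩
      ext w
      rw [← hc]
      simp [mkL_apply, mkMu_apply, Lfam, LinearMap.sum_apply, Fintype.sum_prod_type,
        smul_eq_mul]
  -- the coset finset
  let Vcoset : Finset G := Finset.univ.filter (fun g => g - t ∈ V)
  have hVcoset : Vcoset.card = Nat.card ↥V := by
    rw [Nat.card_eq_fintype_card, Fintype.card_subtype]
    apply Finset.card_bij' (fun g _ => g - t) (fun g _ => g + t)
    · intro g hg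
      simp only [Vcoset, Finset.mem_filter, Finset.mem_univ, true_and] at hg ⊢
      exact hg
    · intro g hg
      simp only [Vcoset, Finset.mem_filter, Finset.mem_univ, true_and] at hg ⊢
      simpa using hg
    · intro g _; abel
    · intro g _; abel
  have claimB : ∀ lam : Fin k → Fin r → ZMod p, lam ≠ 0 →
      ((Tfin lam).card : ℝ) ≤ (Nat.card ↥V : ℝ)^(k-1) *
        ((Nat.card ↥V : ℝ) * (p:ℝ)^(4*r) * (p:ℝ) ^ (-R)) := by
    intro lam hlam
    obtain ⟨i₀, hi₀⟩ := Function.ne_iff.mp hlam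
    let L0 : G →ₗ[ZMod p] (↥W →ₗ[ZMod p] ZMod p) := mkL β (mkMu (lam i₀)) jmap
    let N : ℕ := Nat.card ↥(LinearMap.ker (L0.comp V.subtype))
    have hNbound : (N:ℝ) ≤ (Nat.card ↥V : ℝ) * (p:ℝ)^(4*r) * (p:ℝ)^(-R) := by
      apply auxCard V (L0.comp V.subtype) R (4*r) hp.out.one_lt
      have hr' := auxRank V β R hrank W hWcodim (lam i₀) hi₀
      push_cast
      exact hr'
    have step1 : (Tfin lam).card ≤ N * ((Tfin lam).image (fun z => Function.update z i₀ t)).card := by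
      apply Finset.card_le_mul_card_image
      intro b hb
      rcases Finset.eq_empty_or_nonempty ((Tfin lam).filter (fun z => Function.update z i₀ t = b))
        with he | ⟨z₁, hz₁⟩
      · rw [he]; simp
      · have hz₁T : z₁ ∈ Tfin lam := (Finset.mem_filter.mp hz₁).1
        have hz₁b : Function.update z₁ i₀ t = b := (Finset.mem_filter.mp hz₁).2
        obtain ⟨hz₁V, hz₁E⟩ := (Finset.mem_filter.mp hz₁T).2
        have hofflem : ∀ z ∈ (Tfin lam).filter (fun z => Function.update z i₀ t = b),
            ∀ i, i ≠ i₀ → z i = z₁ i := by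
          intro z hzf i hi
          obtain ⟨hzT, hzb⟩ := Finset.mem_filter.mp hzf
          have := congrFun (hzb.trans hz₁b.symm) i
          simpa [Function.update_of_ne hi] using this
        have key : ∀ z ∈ (Tfin lam).filter (fun z => Function.update z i₀ t = b),
            (z i₀ - z₁ i₀) ∈ V ∧ L0 (z i₀ - z₁ i₀) = 0 := by
          intro z hzf
          obtain ⟨hzT, hzb⟩ := Finset.mem_filter.mp hzf
          obtain ⟨hzV, hzE⟩ := (Finset.mem_filter.mp hzT).2
          constructor
          · rw [show z i₀ - z₁ i₀ = (z i₀ - t) - (z₁ i₀ - t) from by abel]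
            exact sub_mem (hzV i₀) (hz₁V i₀)
          · have hsum : ∀ z' : Fin k → G, (∀ i, i ≠ i₀ → z' i = z₁ i) →
                ((∑ i, mkL β (mkMu (lam i)) jmap (z' i)) = ξ) →
                mkL β (mkMu (lam i₀)) jmap (z' i₀)
                  = ξ - ∑ i ∈ Finset.univ.erase i₀, mkL β (mkMu (lam i)) jmap (z₁ i) := by
              intro z' hoff' hE
              rw [← Finset.add_sum_erase _ _ (Finset.mem_univ i₀)] at hE
              have hrw : (∑ i ∈ Finset.univ.erase i₀, mkL β (mkMu (lam i)) jmap (z' i))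
                  = ∑ i ∈ Finset.univ.erase i₀, mkL β (mkMu (lam i)) jmap (z₁ i) :=
                Finset.sum_congr rfl (fun i hi => by rw [hoff' i (Finset.ne_of_mem_erase hi)])
              rw [hrw] at hE
              exact eq_sub_of_add_eq hE
            have e1 := hsum z (hofflem z hzf) hzE
            have e2 := hsum z₁ (fun _ _ => rfl) hz₁E
            show mkL β (mkMu (lam i₀)) jmap (z i₀ - z₁ i₀) = 0
            rw [map_sub, e1, e2, sub_self]
        have hinj : ((Tfin lam).filter (fun z => Function.update z i₀ t = b)).card
            ≤ (Finset.univ.filter (fun g : G => g ∈ V ∧ L0 g = 0)).card := by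
          apply Finset.card_le_card_of_injOn (fun z => z i₀ - z₁ i₀)
          · intro z hzf
            exact Finset.mem_filter.mpr ⟨Finset.mem_univ _, key z hzf⟩
          · intro z hzf z' hzf' hzz
            have hzi : z i₀ = z' i₀ := by
              have : z i₀ - z₁ i₀ = z' i₀ - z₁ i₀ := hzz
              exact sub_left_injective this
            funext i
            by_cases hii : i = i₀
            · rw [hii]; exact hzi
            · rw [hofflem z (Finset.mem_coe.mp hzf) i hii,
                hofflem z' (Finset.mem_coe.mp hzf') i hii]
        have hcardeq : (Finset.univ.filter (fun g : G => g ∈ V ∧ L0 g = 0)).card = N := by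
          rw [← Fintype.card_subtype,
            show N = Nat.card ↥(LinearMap.ker (L0.comp V.subtype)) from rfl,
            Nat.card_eq_fintype_card]
          apply Fintype.card_congr
          exact {
            toFun := fun g => ⟨⟨g.1, g.2.1⟩, LinearMap.mem_ker.mpr g.2.2⟩
            invFun := fun v => ⟨((v : ↥V) : G), ⟨(v : ↥V).2, LinearMap.mem_ker.mp v.2⟩⟩
            left_inv := fun g => rfl
            right_inv := fun v => rfl }
        rw [hcardeq] at hinj
        exact hinj
    have step2 : ((Tfin lam).image (fun z => Function.update z i₀ t)).card ≤ (Nat.card ↥V)^(k-1) := by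
      have hsub2 : (Tfin lam).image (fun z => Function.update z i₀ t) ⊆
          Fintype.piFinset (fun i => if i = i₀ then ({t} : Finset G) else Vcoset) := by
        intro b hb
        obtain ⟨z, hzT, rfl⟩ := Finset.mem_image.mp hb
        obtain ⟨hzV, -⟩ := (Finset.mem_filter.mp hzT).2
        rw [Fintype.mem_piFinset]
        intro i
        by_cases hii : i = i₀
        · subst hii; simp [Function.update_self]
        · simp [Function.update_of_ne hii, hii, Vcoset, hzV i]
      refine (Finset.card_le_card hsub2).trans ?_
      rw [Fintype.card_piFinset]
      rw [← Finset.prod_erase_mul _ _ (Finset.mem_univ i₀)]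
      have hi1 : (if i₀ = i₀ then ({t} : Finset G) else Vcoset).card = 1 := by simp
      rw [hi1, mul_one]
      have hcongr : ∀ i ∈ Finset.univ.erase i₀,
          ((if i = i₀ then ({t} : Finset G) else Vcoset)).card = Nat.card ↥V := by
        intro i hi
        rw [if_neg (Finset.ne_of_mem_erase hi), hVcoset]
      rw [Finset.prod_congr rfl hcongr, Finset.prod_const,
        Finset.card_erase_of_mem (Finset.mem_univ _), Finset.card_univ, Fintype.card_fin]
    calc ((Tfin lam).card : ℝ)
        ≤ (N : ℝ) * (((Tfin lam).image (fun z => Function.update z i₀ t)).card : ℝ) := by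
          exact_mod_cast step1
      _ ≤ ((Nat.card ↥V : ℝ) * (p:ℝ)^(4*r) * (p:ℝ)^(-R)) * (Nat.card ↥V : ℝ)^(k-1) := by
          apply mul_le_mul hNbound (by exact_mod_cast step2) (by positivity) (by positivity)
      _ = (Nat.card ↥V : ℝ)^(k-1) * ((Nat.card ↥V : ℝ) * (p:ℝ)^(4*r) * (p:ℝ)^(-R)) := by ring
  -- assemble the counts
  have hSfin : S.Finite := Set.toFinite _
  have hsubU : hSfin.toFinset ⊆
      (Finset.univ.filter (fun lam : Fin k → Fin r → ZMod p => lam ≠ 0)).biUnion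
        (fun lam => Tfin lam) := by
    intro z hzz
    rw [Set.Finite.mem_toFinset] at hzz
    obtain ⟨lam, hl0, hlT⟩ := claimA z hzz
    exact Finset.mem_biUnion.mpr ⟨lam, Finset.mem_filter.mpr ⟨Finset.mem_univ _, hl0⟩, hlT⟩
  have hcard1 : (S.ncard : ℝ) ≤
      ∑ lam ∈ Finset.univ.filter (fun lam : Fin k → Fin r → ZMod p => lam ≠ 0),
        ((Tfin lam).card : ℝ) := by
    rw [Set.ncard_eq_toFinset_card _ hSfin]
    have h1 := (Finset.card_le_card hsubU).trans (Finset.card_biUnion_le)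
    exact_mod_cast h1
  have hΛcard : ((Finset.univ.filter (fun lam : Fin k → Fin r → ZMod p => lam ≠ 0)).card : ℝ)
      ≤ (p:ℝ)^(r*k) := by
    have h1 : (Finset.univ.filter (fun lam : Fin k → Fin r → ZMod p => lam ≠ 0)).card
        ≤ Fintype.card (Fin k → Fin r → ZMod p) := by
      rw [← Finset.card_univ]
      exact Finset.card_filter_le _ _
    have h2 : Fintype.card (Fin k → Fin r → ZMod p) = p^(r*k) := by
      rw [Fintype.card_fun, Fintype.card_fun, ZMod.card, Fintype.card_fin, Fintype.card_fin,
        ← pow_mul]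
    rw [h2] at h1
    exact_mod_cast h1
  have hVpos : (0:ℝ) < (Nat.card ↥V : ℝ) := by
    have h0 : 0 < Nat.card ↥V := Nat.card_pos
    exact_mod_cast h0
  have hBnd : (S.ncard : ℝ) ≤ (p:ℝ)^(r*k) *
      ((Nat.card ↥V : ℝ)^(k-1) * ((Nat.card ↥V : ℝ) * (p:ℝ)^(4*r) * (p:ℝ)^(-R))) := by
    refine hcard1.trans ?_
    have hb : ∀ lam ∈ Finset.univ.filter (fun lam : Fin k → Fin r → ZMod p => lam ≠ 0),
        ((Tfin lam).card : ℝ) ≤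
          ((Nat.card ↥V : ℝ)^(k-1) * ((Nat.card ↥V : ℝ) * (p:ℝ)^(4*r) * (p:ℝ)^(-R))) :=
      fun lam hl => claimB lam (Finset.mem_filter.mp hl).2
    calc (∑ lam ∈ Finset.univ.filter (fun lam : Fin k → Fin r → ZMod p => lam ≠ 0),
          ((Tfin lam).card : ℝ))
        ≤ ∑ _lam ∈ Finset.univ.filter (fun lam : Fin k → Fin r → ZMod p => lam ≠ 0),
          ((Nat.card ↥V : ℝ)^(k-1) * ((Nat.card ↥V : ℝ) * (p:ℝ)^(4*r) * (p:ℝ)^(-R))) :=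
          Finset.sum_le_sum hb
      _ = ((Finset.univ.filter (fun lam : Fin k → Fin r → ZMod p => lam ≠ 0)).card : ℝ) *
          ((Nat.card ↥V : ℝ)^(k-1) * ((Nat.card ↥V : ℝ) * (p:ℝ)^(4*r) * (p:ℝ)^(-R))) := by
          rw [Finset.sum_const, nsmul_eq_mul]
      _ ≤ (p:ℝ)^(r*k) *
          ((Nat.card ↥V : ℝ)^(k-1) * ((Nat.card ↥V : ℝ) * (p:ℝ)^(4*r) * (p:ℝ)^(-R))) := by
          apply mul_le_mul_of_nonneg_right hΛcard
          positivity
  have hfinal : c' ≤ (p:ℝ)^(r*k) * (p:ℝ)^(4*r) * (p:ℝ)^(-R) := by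
    have h0 := hcount.trans hBnd
    have hpow : (Nat.card ↥V:ℝ)^(k-1) * (Nat.card ↥V:ℝ) = (Nat.card ↥V:ℝ)^k := by
      rw [← pow_succ]
      congr 1
      omega
    have h1 : c' * (Nat.card ↥V:ℝ)^k
        ≤ ((p:ℝ)^(r*k) * (p:ℝ)^(4*r) * (p:ℝ)^(-R)) * (Nat.card ↥V:ℝ)^k := by
      calc c' * (Nat.card ↥V:ℝ)^k ≤ _ := h0
        _ = ((p:ℝ)^(r*k) * (p:ℝ)^(4*r) * (p:ℝ)^(-R)) *
            ((Nat.card ↥V:ℝ)^(k-1) * (Nat.card ↥V:ℝ)) := by ring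
        _ = _ := by rw [hpow]
    have hVk : (0:ℝ) < (Nat.card ↥V:ℝ)^k := by positivity
    exact le_of_mul_le_mul_right h1 hVk
  have hc'1 : c' ≤ 1 := by
    have hsub1 : hSfin.toFinset ⊆ Fintype.piFinset (fun _ : Fin k => Vcoset) := by
      intro z hzz
      rw [Set.Finite.mem_toFinset] at hzz
      rw [Fintype.mem_piFinset]
      intro i
      simp only [Vcoset, Finset.mem_filter, Finset.mem_univ, true_and]
      exact hX _ (hzz.1 i).1
    have h2 : (S.ncard : ℝ) ≤ (Nat.card ↥V:ℝ)^k := by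
      have h3 := Finset.card_le_card hsub1
      rw [Fintype.card_piFinset] at h3
      rw [Set.ncard_eq_toFinset_card _ hSfin]
      have h4 : (∏ _i : Fin k, Vcoset.card) = (Nat.card ↥V)^k := by
        rw [Finset.prod_const, hVcoset, Finset.card_univ, Fintype.card_fin]
      rw [h4] at h3
      exact_mod_cast h3
    have h5 := hcount.trans h2
    have hVk : (0:ℝ) < (Nat.card ↥V:ℝ)^k := by positivity
    nlinarith
  -- the logarithmic computation
  have hppos : (0:ℝ) < p := by
    have := hp.out.pos
    exact_mod_cast this
  have hlogp : Real.log 2 ≤ Real.log p := by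
    apply (Real.log_le_log_iff (by norm_num) hppos).mpr
    exact_mod_cast hp.out.two_le
  have hlog2 : (0.6931471803:ℝ) < Real.log 2 := Real.log_two_gt_d9
  have hLp69 : (0.6931471803:ℝ) ≤ Real.log p := le_trans hlog2.le hlogp
  have hlogmain : Real.log c' ≤ ((r*k:ℕ):ℝ) * Real.log p + ((4*r:ℕ):ℝ) * Real.log p
      - R * Real.log p := by
    have h1 : Real.log c' ≤ Real.log ((p:ℝ)^(r*k) * (p:ℝ)^(4*r) * (p:ℝ)^(-R)) :=
      (Real.log_le_log_iff hc' (by positivity)).mpr hfinal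
    rw [Real.log_mul (by positivity) (by positivity),
      Real.log_mul (by positivity) (by positivity),
      Real.log_pow, Real.log_pow, Real.log_rpow hppos] at h1
    linarith
  have hinv1 : (1:ℝ) ≤ c'⁻¹ := by
    rw [le_inv_comm₀ (by norm_num) hc']
    simpa using hc'1
  have hB2 : Real.log 2 ≤ Real.log (10 * c'⁻¹) := by
    apply (Real.log_le_log_iff (by norm_num) (by positivity)).mpr
    nlinarith
  have hB69 : (0.6931471803:ℝ) ≤ Real.log (10 * c'⁻¹) := le_trans hlog2.le hB2
  have hBc : -Real.log c' ≤ Real.log (10 * c'⁻¹) := by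
    rw [Real.log_mul (by norm_num) (by positivity), Real.log_inv]
    have h10 : (0:ℝ) ≤ Real.log 10 := Real.log_nonneg (by norm_num)
    linarith
  have hA0 : (0:ℝ) ≤ (k:ℝ)*(r:ℝ) := by positivity
  have hk1 : (1:ℝ) ≤ (k:ℝ) := by exact_mod_cast hk
  have hrk5 : ((r*k:ℕ):ℝ) + ((4*r:ℕ):ℝ) ≤ 5 * ((k:ℝ)*(r:ℝ)) := by
    push_cast
    nlinarith [Nat.cast_nonneg (α := ℝ) r]
  have hchain : R * Real.log p ≤ 5 * ((k:ℝ)*(r:ℝ)) * Real.log p + Real.log (10 * c'⁻¹) := by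
    have h1 : (((r*k:ℕ):ℝ) + ((4*r:ℕ):ℝ)) * Real.log p ≤ (5 * ((k:ℝ)*(r:ℝ))) * Real.log p :=
      mul_le_mul_of_nonneg_right hrk5 (by linarith)
    nlinarith [hlogmain, hBc]
  have hmul : 7 * ((k:ℝ)*(r:ℝ) + Real.log (10 * c'⁻¹) + 1) * Real.log p ≤ R * Real.log p :=
    mul_le_mul_of_nonneg_right hR (by linarith)
  nlinarith [hchain, hmul, hA0, hLp69, hB69,
    mul_nonneg (sub_nonneg.mpr hLp69) (sub_nonneg.mpr hB69),
    mul_nonneg (sub_nonneg.mpr hLp69) hA0]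
end

section
/- Let G, H be finite-dimensional F_p-vector spaces, let η ∈ (0,1), let k ≥ 2 and 2 ≤ ℓ ≤ k, and suppose φ_x : G → H is a linear map for each x ∈ G. Assume that for every linear map ψ : G → H, the inequality rank(φ_x − ψ) ≤ 8k + 2·log_p(η^{−1}) + 10 holds for at most p^{−8k+4}·η^2·|G| elements x ∈ G. Then for all but at most η·|G|^{2ℓ} of the tuples (x_1,...,x_{2ℓ−1}, z) ∈ G^{2ℓ}, the vectors φ_{x_1}(z), φ_{x_2}(z), ..., φ_{x_{2ℓ−1}}(z) ∈ H are linearly independent over F_p. -/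
open Finset LinearMap Module

section aux
variable {p : ℕ} [hp : Fact p.Prime] {G H : Type} [AddCommGroup G] [Module (ZMod p) G] [Fintype G]
  [AddCommGroup H] [Module (ZMod p) H]

lemma aux_card_ker (ψ : G →ₗ[ZMod p] H) :
    (Nat.card {z : G // ψ z = 0} : ℝ) =
      (Fintype.card G : ℝ) * (p : ℝ) ^ (-(finrank (ZMod p) (LinearMap.range ψ) : ℝ)) := by
  classical
  have hp0 : (0:ℝ) < p := by exact_mod_cast hp.out.pos
  have h1 : Nat.card {z : G // ψ z = 0} = Fintype.card (LinearMap.ker ψ) := by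
    rw [← Nat.card_eq_fintype_card]
    exact Nat.card_congr (Equiv.subtypeEquivRight (fun z => (LinearMap.mem_ker).symm))
  have h2 : Fintype.card (LinearMap.ker ψ) = p ^ finrank (ZMod p) (LinearMap.ker ψ) := by
    rw [card_eq_pow_finrank (K := ZMod p), ZMod.card]
  have h3 : Fintype.card G = p ^ finrank (ZMod p) G := by
    rw [card_eq_pow_finrank (K := ZMod p), ZMod.card]
  have h4 : finrank (ZMod p) (LinearMap.range ψ) + finrank (ZMod p) (LinearMap.ker ψ)
      = finrank (ZMod p) G := LinearMap.finrank_range_add_finrank_ker ψ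
  rw [h1, h2, h3]
  push_cast
  rw [← Real.rpow_natCast (p:ℝ) (finrank (ZMod p) (LinearMap.ker ψ)),
    ← Real.rpow_natCast (p:ℝ) (finrank (ZMod p) G), ← Real.rpow_add hp0]
  congr 1
  have := congrArg (Nat.cast : ℕ → ℝ) h4
  push_cast at this ⊢
  linarith


lemma aux_Tc {R Q : ℝ} (hp1R : (1:ℝ) < p)
    {n : ℕ} (hn : 1 ≤ n) (φ : G → (G →ₗ[ZMod p] H))
    (hfar : ∀ ψ : G →ₗ[ZMod p] H,
      (({ x : G | (finrank (ZMod p) (LinearMap.range (φ x - ψ)) : ℝ) ≤ R } : Set G).ncard : ℝ)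
        ≤ Q * (Fintype.card G : ℝ))
    (c : Fin n → ZMod p) (hc : c ≠ 0)
    (P : Finset ((Fin n → G) × G))
    (hP : ∀ w : (Fin n → G) × G, w ∈ P ↔ ∑ i, c i • φ (w.1 i) w.2 = 0) :
    (P.card : ℝ) ≤ (Q + (p:ℝ) ^ (-R)) * (Fintype.card G : ℝ) ^ (n + 1) := by
  classical
  have hp0R : (0:ℝ) < p := by linarith
  set cG : ℝ := (Fintype.card G : ℝ) with hcG
  have hcG0 : (0:ℝ) ≤ cG := by positivity
  obtain ⟨e, rfl⟩ : ∃ e, n = e + 1 := ⟨n - 1, by omega⟩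
  obtain ⟨m, hcm⟩ : ∃ m, c m ≠ 0 := Function.ne_iff.mp hc
  set ψx : (Fin (e + 1) → G) → (G →ₗ[ZMod p] H) := fun x => ∑ i, c i • φ (x i) with hψx
  set r : (Fin (e + 1) → G) → ℕ := fun x => finrank (ZMod p) (LinearMap.range (ψx x)) with hr
  -- fiberwise count over x
  have hcard : (P.card : ℝ)
      = ∑ x : Fin (e + 1) → G, (Nat.card {z : G // ψx x z = 0} : ℝ) := by
    rw [← Fintype.card_coe]
    have e1 : {w : (Fin (e + 1) → G) × G // w ∈ P}
        ≃ {w : (Fin (e + 1) → G) × G // ψx w.1 w.2 = 0} :=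
      Equiv.subtypeEquivRight (fun w => by rw [hP]; simp [hψx])
    have e2 : {w : (Fin (e + 1) → G) × G // ψx w.1 w.2 = 0}
        ≃ Σ x : Fin (e + 1) → G, {z : G // ψx x z = 0} :=
      Equiv.subtypeProdEquivSigmaSubtype (fun x z => ψx x z = 0)
    rw [Fintype.card_congr (e1.trans e2), Fintype.card_sigma]
    push_cast
    exact Finset.sum_congr rfl (fun x _ => by rw [Nat.card_eq_fintype_card])
  rw [hcard]
  have hterm : ∀ x : Fin (e + 1) → G, (Nat.card {z : G // ψx x z = 0} : ℝ)
      = cG * (p:ℝ) ^ (-(r x : ℝ)) := fun x => aux_card_ker (ψx x)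
  -- the bad set of x's
  set A : Finset (Fin (e + 1) → G) := Finset.univ.filter (fun x => (r x : ℝ) ≤ R) with hA
  -- bound the bad set
  have hAcard : (A.card : ℝ) ≤ Q * cG * cG ^ e := by
    set Y := ({ j : Fin (e + 1) // j ≠ m } → G) with hY
    set f : (Fin (e + 1) → G) ≃ Y × G := (Equiv.funSplitAt m G).trans (Equiv.prodComm G Y) with hf
    set S : Y → (G →ₗ[ZMod p] H) :=
      (fun y => ∑ i ∈ Finset.univ.erase m, c i • φ (f.symm (y, 0) i)) with hS
    set ψ' : Y → (G →ₗ[ZMod p] H) := (fun y => (-(c m)⁻¹) • S y) with hψ'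
    have hrr : ∀ (y : Y) (g : G),
        r (f.symm (y, g)) = finrank (ZMod p) (LinearMap.range (φ g - ψ' y)) := by
      intro y g
      have hsum : ψx (f.symm (y, g)) = c m • φ g + S y := by
        show (∑ i, c i • φ (f.symm (y, g) i)) = _
        rw [← Finset.add_sum_erase _ _ (Finset.mem_univ m)]
        congr 1
        · congr 2
          simp [hf]
        · rw [hS]
          apply Finset.sum_congr rfl
          intro i hi
          have h : i ≠ m := (Finset.mem_erase.mp hi).1
          congr 2
          simp [hf, h]
      have hsm : c m • (φ g - ψ' y) = c m • φ g + S y := by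
        rw [hψ', smul_sub, smul_smul, mul_neg, mul_inv_cancel₀ hcm, neg_smul, one_smul,
          sub_neg_eq_add]
      show finrank (ZMod p) (LinearMap.range (ψx (f.symm (y, g)))) = _
      rw [hsum, ← hsm, LinearMap.range_smul _ _ hcm]
    have hAc : A.card = ∑ y : Y, Fintype.card {g : G // (r (f.symm (y, g)) : ℝ) ≤ R} := by
      rw [← Fintype.card_coe]
      have e1 : {x // x ∈ A} ≃ {x : Fin (e + 1) → G // (r x : ℝ) ≤ R} :=
        Equiv.subtypeEquivRight (fun x => by simp [hA])
      have e2 : {x : Fin (e + 1) → G // (r x : ℝ) ≤ R} ≃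
          {q : Y × G // (r (f.symm q) : ℝ) ≤ R} :=
        Equiv.subtypeEquiv f (fun x => by rw [Equiv.symm_apply_apply])
      have e3 : {q : Y × G // (r (f.symm q) : ℝ) ≤ R} ≃
          Σ y : Y, {g : G // (r (f.symm (y, g)) : ℝ) ≤ R} :=
        Equiv.subtypeProdEquivSigmaSubtype (fun y g => (r (f.symm (y, g)) : ℝ) ≤ R)
      rw [Fintype.card_congr (e1.trans (e2.trans e3)), Fintype.card_sigma]
    have hy : ∀ y : Y, (Fintype.card {g : G // (r (f.symm (y, g)) : ℝ) ≤ R} : ℝ) ≤ Q * cG := by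
      intro y
      have hh := hfar (ψ' y)
      have hset : ({ x : G |
          (finrank (ZMod p) (LinearMap.range (φ x - ψ' y)) : ℝ) ≤ R } : Set G).ncard
          = Fintype.card {g : G // (r (f.symm (y, g)) : ℝ) ≤ R} := by
        rw [← Nat.card_coe_set_eq, Nat.card_eq_fintype_card]
        exact Fintype.card_congr (Equiv.subtypeEquivRight (fun g => by rw [hrr y g]; exact Iff.rfl))
      rw [hset] at hh
      exact hh
    have hYcard : (Fintype.card Y : ℝ) = cG ^ e := by
      have h1 : Fintype.card { j : Fin (e + 1) // j ≠ m } = e := by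
        rw [Fintype.card_subtype_compl, Fintype.card_subtype_eq, Fintype.card_fin]
        omega
      have h2 : Fintype.card Y = Fintype.card G ^ e := by
        show Fintype.card ({ j : Fin (e + 1) // j ≠ m } → G) = _
        rw [Fintype.card_fun, h1]
      rw [h2]
      push_cast
      rfl
    calc (A.card : ℝ) = ∑ y : Y, (Fintype.card {g : G // (r (f.symm (y, g)) : ℝ) ≤ R} : ℝ) := by
          rw [hAc]
          push_cast
          rfl
      _ ≤ ∑ _y : Y, Q * cG := Finset.sum_le_sum (fun y _ => hy y)
      _ = (Fintype.card Y : ℝ) * (Q * cG) := by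
          rw [Finset.sum_const, nsmul_eq_mul, Finset.card_univ]
      _ = Q * cG * cG ^ e := by rw [hYcard]; ring
  -- split the sum
  have hsplit : ∑ x : Fin (e + 1) → G, (Nat.card {z : G // ψx x z = 0} : ℝ)
      ≤ (A.card : ℝ) * cG + cG ^ (e + 1) * (cG * (p:ℝ) ^ (-R)) := by
    calc ∑ x : Fin (e + 1) → G, (Nat.card {z : G // ψx x z = 0} : ℝ)
        = ∑ x ∈ A, (Nat.card {z : G // ψx x z = 0} : ℝ)
          + ∑ x ∈ Finset.univ.filter (fun x => ¬ ((r x : ℝ) ≤ R)),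
            (Nat.card {z : G // ψx x z = 0} : ℝ) := by
          rw [hA, Finset.sum_filter_add_sum_filter_not]
      _ ≤ ∑ _x ∈ A, cG + ∑ _x ∈ Finset.univ.filter (fun x => ¬ ((r x : ℝ) ≤ R)),
            cG * (p:ℝ) ^ (-R) := by
          apply add_le_add
          · apply Finset.sum_le_sum
            intro x _
            rw [hterm x]
            have h1 : (p:ℝ) ^ (-(r x : ℝ)) ≤ 1 := by
              rw [← Real.rpow_zero (p:ℝ)]
              apply Real.rpow_le_rpow_of_exponent_le hp1R.le
              exact neg_nonpos.mpr (by positivity)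
            nlinarith [hcG0]
          · apply Finset.sum_le_sum
            intro x hx
            rw [hterm x]
            have h2 : (R : ℝ) < (r x : ℝ) := by
              have := (Finset.mem_filter.mp hx).2
              linarith [not_le.mp this]
            have : (p:ℝ) ^ (-(r x : ℝ)) ≤ (p:ℝ) ^ (-R) :=
              Real.rpow_le_rpow_of_exponent_le hp1R.le (by linarith)
            nlinarith [hcG0]
      _ ≤ (A.card : ℝ) * cG + cG ^ (e + 1) * (cG * (p:ℝ) ^ (-R)) := by
          rw [Finset.sum_const, Finset.sum_const, nsmul_eq_mul, nsmul_eq_mul]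
          apply add_le_add_right
          apply mul_le_mul_of_nonneg_right _ (by positivity)
          have : ((Finset.univ.filter (fun x : Fin (e + 1) → G => ¬ ((r x : ℝ) ≤ R))).card : ℝ)
              ≤ (Fintype.card (Fin (e + 1) → G) : ℝ) := by
            exact_mod_cast Finset.card_filter_le _ _
          rw [Fintype.card_fun] at this
          push_cast at this
          simpa using this
  calc ∑ x : Fin (e + 1) → G, (Nat.card {z : G // ψx x z = 0} : ℝ)
      ≤ (A.card : ℝ) * cG + cG ^ (e + 1) * (cG * (p:ℝ) ^ (-R)) := hsplit
    _ ≤ (Q * cG * cG ^ e) * cG + cG ^ (e + 1) * (cG * (p:ℝ) ^ (-R)) := by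
        apply add_le_add_left
        exact mul_le_mul_of_nonneg_right hAcard hcG0
    _ = (Q + (p:ℝ) ^ (-R)) * cG ^ (e + 1 + 1) := by ring
end aux


/-- **Frequent linear independence.** If no single linear map `ψ` is within rank
`8k + 2 log_p(η⁻¹) + 10` of more than `p^{-8k+4}η²|G|` of the maps `φ_x`, then for all but
at most `η|G|^{2ℓ}` tuples `(x₁,…,x_{2ℓ-1}, z)` the vectors `φ_{x₁}(z),…,φ_{x_{2ℓ-1}}(z)`
are linearly independent. -/
theorem frequent_linear_independence (p : ℕ) [hp : Fact p.Prime]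
    (G H : Type) [AddCommGroup G] [Module (ZMod p) G] [Fintype G]
    [AddCommGroup H] [Module (ZMod p) H] [Module.Finite (ZMod p) H]
    (η : ℝ) (hη : 0 < η) (hη1 : η < 1)
    (k ℓ : ℕ) (hk : 2 ≤ k) (hℓ : 2 ≤ ℓ) (hℓk : ℓ ≤ k)
    (φ : G → (G →ₗ[ZMod p] H))
    (hfar : ∀ ψ : G →ₗ[ZMod p] H,
      (({ x : G | (Module.finrank (ZMod p) (LinearMap.range (φ x - ψ)) : ℝ) ≤
          8 * (k : ℝ) + 2 * Real.logb p η⁻¹ + 10 } : Set G).ncard : ℝ) ≤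
        (p : ℝ) ^ (-8 * (k : ℤ) + 4) * η ^ 2 * (Fintype.card G : ℝ)) :
    (({ w : (Fin (2 * ℓ - 1) → G) × G |
        ¬ LinearIndependent (ZMod p) (fun i : Fin (2 * ℓ - 1) => φ (w.1 i) w.2) } :
      Set ((Fin (2 * ℓ - 1) → G) × G)).ncard : ℝ) ≤
      η * (Fintype.card G : ℝ) ^ (2 * ℓ) := by
  classical
  have hp1R : (1:ℝ) < p := by exact_mod_cast hp.out.one_lt
  have hp0R : (0:ℝ) < p := by linarith
  have hp2R : (2:ℝ) ≤ p := by exact_mod_cast hp.out.two_le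
  set n := 2 * ℓ - 1 with hn
  have hn3 : 3 ≤ n := by omega
  set R : ℝ := 8 * (k:ℝ) + 2 * Real.logb p η⁻¹ + 10 with hR
  set cG : ℝ := (Fintype.card G : ℝ) with hcG
  have hcG0 : 0 ≤ cG := by positivity
  set T : (Fin n → ZMod p) → Finset ((Fin n → G) × G) :=
    (fun c => univ.filter (fun w => ∑ i, c i • φ (w.1 i) w.2 = 0)) with hT
  -- Step 1 : union bound over nonzero coefficient vectors
  have step1 : (({ w : (Fin n → G) × G |
        ¬ LinearIndependent (ZMod p) (fun i : Fin n => φ (w.1 i) w.2) }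
      : Set ((Fin n → G) × G)).ncard : ℝ) ≤
      ∑ c ∈ univ.filter (fun c : Fin n → ZMod p => c ≠ 0), ((T c).card : ℝ) := by
    rw [Set.ncard_eq_toFinset_card', Set.toFinset_setOf]
    rw [← Nat.cast_sum]
    have hsub : univ.filter (fun w : (Fin n → G) × G =>
        ¬ LinearIndependent (ZMod p) (fun i : Fin n => φ (w.1 i) w.2)) ⊆
        (univ.filter (fun c : Fin n → ZMod p => c ≠ 0)).biUnion T := by
      intro w hw
      rw [Finset.mem_filter] at hw
      obtain ⟨g, hsum, i, hgi⟩ := Fintype.not_linearIndependent_iff.mp hw.2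
      refine Finset.mem_biUnion.mpr ⟨g, ?_, ?_⟩
      · simp only [Finset.mem_filter, Finset.mem_univ, true_and]
        intro h; exact hgi (by rw [h]; rfl)
      · rw [hT]; simpa using hsum
    calc ((univ.filter (fun w : (Fin n → G) × G =>
        ¬ LinearIndependent (ZMod p) (fun i : Fin n => φ (w.1 i) w.2))).card : ℝ)
        ≤ (((univ.filter (fun c : Fin n → ZMod p => c ≠ 0)).biUnion T).card : ℝ) := by
          exact_mod_cast Finset.card_le_card hsub
      _ ≤ _ := by exact_mod_cast Finset.card_biUnion_le
  -- Step 2 : bound each T c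
  have step2 : ∀ c : Fin n → ZMod p, c ≠ 0 → ((T c).card : ℝ) ≤
      ((p:ℝ) ^ (-8 * (k : ℤ) + 4) * η ^ 2 + (p:ℝ) ^ (-R)) * cG ^ (n + 1) := by
    intro c hc
    refine aux_Tc hp1R (by omega) φ ?_ c hc (T c)
      (fun w => by simp [hT, Finset.mem_filter])
    intro ψ
    exact hfar ψ
  -- Step 3 : assemble
  have hcards : (Fintype.card (Fin n → ZMod p) : ℝ) = (p:ℝ) ^ n := by
    simp [Fintype.card_fun, ZMod.card]
  have hpR : (p:ℝ) ^ (-R) = (p:ℝ) ^ (-((8:ℝ) * k + 10)) * η ^ 2 := by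
    have hlog : (p:ℝ) ^ (Real.logb p η⁻¹) = η⁻¹ :=
      Real.rpow_logb hp0R (by linarith) (by positivity)
    have h1 : -R = -((8:ℝ) * k + 10) + Real.logb p η⁻¹ * (-2) := by rw [hR]; ring
    rw [h1, Real.rpow_add hp0R, Real.rpow_mul hp0R.le, hlog]
    congr 1
    rw [show (-2:ℝ) = ((-2:ℤ):ℝ) by norm_num, Real.rpow_intCast, zpow_neg, inv_zpow, inv_inv]
    norm_cast
  have key : (p:ℝ) ^ (n:ℕ) * (((p:ℝ) ^ (-8 * (k : ℤ) + 4) * η ^ 2 + (p:ℝ) ^ (-R))) ≤ η := by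
    have hk2R : (2:ℝ) ≤ (k:ℝ) := by exact_mod_cast hk
    have hnk : (n:ℝ) ≤ 2 * (k:ℝ) - 1 := by
      have h3 : n ≤ 2 * k - 1 := by omega
      have h2k : 1 ≤ 2 * k := by omega
      calc (n:ℝ) ≤ ((2 * k - 1 : ℕ) : ℝ) := by exact_mod_cast h3
        _ = 2 * (k:ℝ) - 1 := by push_cast [h2k]; ring
    have haux : ∀ a : ℝ, (n:ℝ) + a ≤ -1 → (p:ℝ) ^ (n:ℕ) * (p:ℝ) ^ a ≤ 1/2 := by
      intro a ha
      rw [← Real.rpow_natCast (p:ℝ) n, ← Real.rpow_add hp0R]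
      calc (p:ℝ) ^ ((n:ℝ) + a) ≤ (p:ℝ) ^ (-1:ℝ) :=
            Real.rpow_le_rpow_of_exponent_le hp1R.le ha
        _ = (p:ℝ)⁻¹ := by rw [Real.rpow_neg_one]
        _ ≤ 1/2 := by rw [inv_le_comm₀ hp0R (by norm_num)]; linarith
    have h1 : (p:ℝ) ^ (n:ℕ) * (p:ℝ) ^ (((-8 * (k : ℤ) + 4 : ℤ)):ℝ) ≤ 1/2 := by
      apply haux
      push_cast
      linarith
    have h2 : (p:ℝ) ^ (n:ℕ) * (p:ℝ) ^ (-((8:ℝ) * k + 10)) ≤ 1/2 := by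
      apply haux
      linarith
    have hz : (p:ℝ) ^ (-8 * (k : ℤ) + 4) = (p:ℝ) ^ (((-8 * (k : ℤ) + 4 : ℤ)):ℝ) := by
      rw [Real.rpow_intCast]
    have hη2 : η ^ 2 ≤ η := by nlinarith
    have hη20 : 0 ≤ η ^ 2 := by positivity
    rw [hpR, hz]
    nlinarith [mul_nonneg (sub_nonneg.2 h1) hη20, mul_nonneg (sub_nonneg.2 h2) hη20, hη2]
  calc (({ w : (Fin n → G) × G |
        ¬ LinearIndependent (ZMod p) (fun i : Fin n => φ (w.1 i) w.2) }
      : Set ((Fin n → G) × G)).ncard : ℝ)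
      ≤ ∑ c ∈ univ.filter (fun c : Fin n → ZMod p => c ≠ 0), ((T c).card : ℝ) := step1
    _ ≤ ∑ _c ∈ univ.filter (fun c : Fin n → ZMod p => c ≠ 0),
          ((p:ℝ) ^ (-8 * (k : ℤ) + 4) * η ^ 2 + (p:ℝ) ^ (-R)) * cG ^ (n + 1) := by
        apply Finset.sum_le_sum
        intro c hc
        exact step2 c (by simpa using (Finset.mem_filter.mp hc).2)
    _ ≤ (p:ℝ) ^ (n:ℕ) * (((p:ℝ) ^ (-8 * (k : ℤ) + 4) * η ^ 2 + (p:ℝ) ^ (-R)) * cG ^ (n + 1)) := by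
        rw [Finset.sum_const, nsmul_eq_mul]
        apply mul_le_mul_of_nonneg_right
        · rw [← hcards]
          exact_mod_cast Finset.card_filter_le _ _
        · positivity
    _ ≤ η * cG ^ (n + 1) := by
        rw [← mul_assoc]
        exact mul_le_mul_of_nonneg_right key (by positivity)
    _ = η * cG ^ (2 * ℓ) := by congr 2; omega
end
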